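/- arXiv:1404.5782 — 6 statements merged into one kernel-verified Lean document; each statement's English description precedes it below -/
import Mathlib

section
/- Let D be a 2-strong digraph of order n = 2m+1 ≥ 3. Then any two T-vertices of D lie on a common directed cycle of D. -/
/-!
Basic framework: finite loopless digraphs (arcs may exist in both directions),
degrees, adjacency, directed cycles (as injective maps from `ZMod k` respecting
arcs), strong and 2-strong connectivity, T-vertices, and the special digraphs
`D₅`, `D₇`, the classes `L₁`, `L₂`, etc. from the paper
"On Cycles through Vertices of Large Semidegree in Digraphs".
-/

/-- A digraph: a loopless arc relation (arcs `u → v`; both `uv` and `vu` allowed). -/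
structure Dgr (V : Type*) where
  Arc : V → V → Prop
  loopless : ∀ v, ¬ Arc v v

namespace Dgr

variable {V : Type*}

/-- Two vertices are adjacent if there is an arc between them in some direction. -/
def Adj (D : Dgr V) (u v : V) : Prop := D.Arc u v ∨ D.Arc v u

/-- Out-degree `d⁺(u)`. -/
noncomputable def outDeg (D : Dgr V) (u : V) : ℕ := {v | D.Arc u v}.ncard

/-- In-degree `d⁻(u)`. -/
noncomputable def inDeg (D : Dgr V) (u : V) : ℕ := {v | D.Arc v u}.ncard

/-- Degree `d(u) = d⁺(u) + d⁻(u)`. -/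
noncomputable def deg (D : Dgr V) (u : V) : ℕ := D.outDeg u + D.inDeg u

/-- `d⁺(u, A)`: number of out-neighbours of `u` in `A`. -/
noncomputable def outDegOn (D : Dgr V) (u : V) (A : Set V) : ℕ := {v ∈ A | D.Arc u v}.ncard

/-- `d⁻(u, A)`: number of in-neighbours of `u` in `A`. -/
noncomputable def inDegOn (D : Dgr V) (u : V) (A : Set V) : ℕ := {v ∈ A | D.Arc v u}.ncard

/-- `d(u, A) = d⁺(u, A) + d⁻(u, A)`. -/
noncomputable def degOn (D : Dgr V) (u : V) (A : Set V) : ℕ := D.outDegOn u A + D.inDegOn u A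

/-- In a digraph of order `2m+1`, a `T`-vertex is one with `d⁺(u) ≥ m` and `d⁻(u) ≥ m`. -/
def TVertex (D : Dgr V) (m : ℕ) (u : V) : Prop := m ≤ D.outDeg u ∧ m ≤ D.inDeg u

/-- A directed cycle of length `k ≥ 2`, given as an injective map `c : ZMod k → V`
with an arc from each `c i` to `c (i+1)`. -/
def IsCycle (D : Dgr V) {k : ℕ} (c : ZMod k → V) : Prop :=
  2 ≤ k ∧ Function.Injective c ∧ ∀ i, D.Arc (c i) (c (i + 1))

/-- `D` has a (directed) cycle through all vertices of `S`. -/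
def CycleThrough (D : Dgr V) (S : Set V) : Prop :=
  ∃ (k : ℕ) (c : ZMod k → V), D.IsCycle c ∧ S ⊆ Set.range c

/-- A Hamiltonian cycle: a cycle through all the vertices. -/
def Hamiltonian (D : Dgr V) [Fintype V] : Prop :=
  ∃ c : ZMod (Fintype.card V) → V, D.IsCycle c ∧ Function.Surjective c

/-- `D` is strong: a directed path (walk) from `u` to `v` for every pair of
distinct vertices. -/
def Strong (D : Dgr V) : Prop :=
  ∀ u v : V, u ≠ v → Relation.TransGen D.Arc u v

/-- The induced subdigraph on a set `S` of vertices. -/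
def restrict (D : Dgr V) (S : Set V) : Dgr S where
  Arc a b := D.Arc a b
  loopless v := D.loopless v

/-- `D` is 2-strong: at least 3 vertices, and deleting any single vertex leaves
a strong digraph. -/
def TwoStrong (D : Dgr V) [Fintype V] : Prop :=
  3 ≤ Fintype.card V ∧ ∀ w : V, (D.restrict {v | v ≠ w}).Strong

/-- Isomorphism of digraphs. -/
def Iso (D : Dgr V) {W : Type*} (E : Dgr W) : Prop :=
  ∃ e : V ≃ W, ∀ a b : V, D.Arc a b ↔ E.Arc (e a) (e b)

end Dgr

/-- A digraph defined by a list of arcs. -/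
def ofList {V : Type*} [DecidableEq V] (l : List (V × V)) (h : ∀ v : V, (v, v) ∉ l) :
    Dgr V where
  Arc a b := (a, b) ∈ l
  loopless v hv := h v hv

/-- Arcs of the digraph `D₅` (vertices `x₁,x₂,x₃ = 0,1,2`, `x = 3`, `y = 4`):
`N⁺(x₁)={x₂,y}`, `N⁺(x₂)={x₃,x}`, `N⁺(x₃)={x,y}`, `N⁺(x)={x₁,x₂}`, `N⁺(y)={x₁,x₃}`. -/
def D5arcs : List (Fin 5 × Fin 5) :=
  [(0,1),(0,4),(1,2),(1,3),(2,3),(2,4),(3,0),(3,1),(4,0),(4,2)]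

/-- The digraph `D₅`. -/
def D5 : Dgr (Fin 5) := ofList D5arcs (by decide)

/-- `L₁`: the three digraphs obtained from `D₅` by adding the arc `x₁x₃`, the arc
`x₃x₁`, or both. -/
def L1 : Set (Dgr (Fin 5)) :=
  {ofList ((0,2) :: D5arcs) (by decide),
   ofList ((2,0) :: D5arcs) (by decide),
   ofList ((0,2) :: (2,0) :: D5arcs) (by decide)}

/-- Arcs of the digraph `D₇` (vertices `x₁,…,x₅ = 0,…,4`, `x = 5`, `y = 6`):
`N⁺(x₁)={x₂,x₅,y}`, `N⁺(x₂)={x₃,x₄,y}`, `N⁺(x₃)={x₂,x₄,x}`, `N⁺(x₄)={x₃,x₅,x}`,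
`N⁺(x₅)={x₁,x,y}`, `N⁺(x)={x₁,x₂,x₃}`, `N⁺(y)={x₁,x₄,x₅}`. -/
def D7arcs : List (Fin 7 × Fin 7) :=
  [(0,1),(0,4),(0,6),(1,2),(1,3),(1,6),(2,1),(2,3),(2,5),(3,2),(3,4),(3,5),
   (4,0),(4,5),(4,6),(5,0),(5,1),(5,2),(6,0),(6,3),(6,4)]

/-- The digraph `D₇`. -/
def D7 : Dgr (Fin 7) := ofList D7arcs (by decide)

/-- Membership in the class `L₂`: there is an enumeration `x_1,…,x_{2m}, x` of the
vertices (here `b i = x_i`, indices mod `2m`, so `b 0 = x_{2m}`) such that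
`x_1x_2⋯x_{2m}x_1` is a cycle, `x` and `x_{2m}` are nonadjacent,
`N⁺(x) = N⁺(x_{2m}) = {x_1,…,x_m}`, `N⁻(x) = N⁻(x_{2m}) = {x_m,…,x_{2m-1}}`,
and there is no arc from `{x_1,…,x_{m-1}}` to `{x_{m+1},…,x_{2m-1}}`. -/
def InL2 {V : Type*} (D : Dgr V) (m : ℕ) : Prop :=
  ∃ (b : ZMod (2 * m) → V) (x : V),
    1 ≤ m ∧
    Function.Injective b ∧ x ∉ Set.range b ∧
    (∀ i, D.Arc (b i) (b (i + 1))) ∧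
    ¬ D.Adj x (b 0) ∧
    {v | D.Arc x v} = (fun i : ℕ => b i) '' Set.Icc 1 m ∧
    {v | D.Arc (b 0) v} = (fun i : ℕ => b i) '' Set.Icc 1 m ∧
    {v | D.Arc v x} = (fun i : ℕ => b i) '' Set.Icc m (2 * m - 1) ∧
    {v | D.Arc v (b 0)} = (fun i : ℕ => b i) '' Set.Icc m (2 * m - 1) ∧
    (∀ i ∈ Set.Icc 1 (m - 1), ∀ j ∈ Set.Icc (m + 1) (2 * m - 1),
      ¬ D.Arc (b (i : ℕ)) (b (j : ℕ)))

/-- `K*_{m,m+1} ⊆ D ⊆ [K_m + K̄_{m+1}]*` (containments as spanning subdigraphs):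
the vertex set splits into `A` of size `m` and its complement of size `m+1`, all arcs
between `A` and `Aᶜ` are present in both directions, and there are no arcs inside `Aᶜ`. -/
def KSandwich {V : Type*} (D : Dgr V) (m : ℕ) : Prop :=
  ∃ A : Set V, A.ncard = m ∧ Aᶜ.ncard = m + 1 ∧
    (∀ a ∈ A, ∀ b ∈ Aᶜ, D.Arc a b ∧ D.Arc b a) ∧
    (∀ u ∈ Aᶜ, ∀ v ∈ Aᶜ, ¬ D.Arc u v)

/-- Alternative (iv) of Theorem 2: `D` has a cycle `C = z_1 z_2 ⋯ z_{2m} z_1` of length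
`2m` such that, with `z` the vertex off the cycle, at least `3` vertices of the cycle
are nonadjacent to `z`, and every cycle vertex `z_l` nonadjacent to `z` satisfies
`z_{l-1}z, z z_{l+1} ∈ A(D)`, `N⁺(z) = N⁺(z_l)` and `N⁻(z) = N⁻(z_l)`; in particular
these vertices together with `z` form an independent set. -/
def PropIV {V : Type*} (D : Dgr V) (m : ℕ) : Prop :=
  ∃ (c : ZMod (2 * m) → V) (z : V),
    D.IsCycle c ∧ z ∉ Set.range c ∧
    3 ≤ {i : ZMod (2 * m) | ¬ D.Adj z (c i)}.ncard ∧
    (∀ i : ZMod (2 * m), ¬ D.Adj z (c i) →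
      D.Arc (c (i - 1)) z ∧ D.Arc z (c (i + 1)) ∧
      {v | D.Arc z v} = {v | D.Arc (c i) v} ∧
      {v | D.Arc v z} = {v | D.Arc v (c i)}) ∧
    (insert z (c '' {i | ¬ D.Adj z (c i)})).Pairwise (fun a b => ¬ D.Adj a b)


section AuxLemmas

open List

variable {α : Type*} {r : α → α → Prop}

/-- Every element of a chain's tail is the target of an `r`-step. -/
lemma chain_forall_aux {p : α → Prop} (hp : ∀ a b, r a b → p b) :
    ∀ (l : List α) (a : α), List.Chain r a l → ∀ v ∈ l, p v := by
  intro l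
  induction l with
  | nil => simp
  | cons c t ih =>
    intro a hc v hv
    rw [List.Chain, List.isChain_cons_cons] at hc
    rcases List.mem_cons.mp hv with h | h
    · exact h ▸ hp _ _ hc.1
    · exact ih c hc.2 v h

/-- From any chain from `a` ending at `b`, extract a duplicate-free one. -/
lemma exists_nodup_chain_aux :
    ∀ (l : List α) (a b : α), List.Chain r a l → (a :: l).getLast? = some b →
      ∃ l', List.Chain r a l' ∧ (a :: l').getLast? = some b ∧ (a :: l').Nodup := by
  intro l
  induction l with
  | nil =>
    intro a b _ hlast
    exact ⟨[], List.Chain.nil, hlast, List.nodup_singleton a⟩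
  | cons c t ih =>
    intro a b hc hlast
    rw [List.Chain, List.isChain_cons_cons] at hc
    rw [List.getLast?_cons_cons] at hlast
    obtain ⟨t', hc', hlast', hnd'⟩ := ih c b hc.2 hlast
    by_cases ha : a ∈ c :: t'
    · obtain ⟨pre, suf, hdecomp⟩ := List.append_of_mem ha
      refine ⟨suf, ?_, ?_, ?_⟩
      · have hch : List.Chain' r (c :: t') := hc'
        have hsuf : (a :: suf) <:+ (c :: t') := ⟨pre, hdecomp.symm⟩
        exact List.IsChain.suffix hch hsuf
      · have : (pre ++ a :: suf).getLast? = some b := hdecomp ▸ hlast'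
        rw [List.getLast?_append] at this
        have hne : (a :: suf).getLast? = some ((a::suf).getLast (List.cons_ne_nil _ _)) :=
          List.getLast?_eq_getLast_of_ne_nil _
        rw [hne] at this ⊢
        simpa using this
      · have hsuf : (a :: suf) <+ (c :: t') :=
          List.IsSuffix.sublist (show (a :: suf) <:+ (c :: t') from ⟨pre, hdecomp.symm⟩)
        exact hnd'.sublist hsuf
    · exact ⟨c :: t', List.chain_cons.mpr ⟨hc.1, hc'⟩, hlast', List.nodup_cons.mpr ⟨ha, hnd'⟩⟩

/-- Simple path extraction from transitive closure. -/
lemma exists_simple_path {a b : α} (h : Relation.TransGen r a b) :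
    ∃ l, List.Chain r a l ∧ (a :: l).getLast? = some b ∧ (a :: l).Nodup := by
  obtain ⟨l, hc, hlast⟩ := List.exists_isChain_cons_of_relationReflTransGen h.to_reflTransGen
  exact exists_nodup_chain_aux l a b hc
    (by rw [List.getLast?_eq_getLast_of_ne_nil (List.cons_ne_nil _ _), hlast])

/-- Crossing lemma: a chain starting in `A` that reaches `y`, all of whose members are
`y` or in `A ∪ B`, and which cannot step from `A` directly to `y`, must contain an arc
from `A` to `B`. -/
lemma cross_lemma {V : Type*} {r : V → V → Prop} {A B : Set V} {y : V} (hyA : y ∉ A)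
    (hstep : ∀ a ∈ A, ¬ r a y) :
    ∀ (l : List V) (cur : V), cur ∈ A → List.Chain r cur l → y ∈ l →
      (∀ v ∈ l, v = y ∨ v ∈ A ∨ v ∈ B) → ∃ a ∈ A, ∃ b ∈ B, r a b := by
  intro l
  induction l with
  | nil => simp
  | cons v l' ih =>
    intro cur hcur hch hy hmem
    rw [List.Chain, List.isChain_cons_cons] at hch
    rcases hmem v List.mem_cons_self with hv | hv | hv
    · exact absurd (hv ▸ hch.1) (hstep cur hcur)
    · refine ih v hv hch.2 ?_ (fun w hw => hmem w (List.mem_cons_of_mem _ hw))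
      rcases List.mem_cons.mp hy with h | h
      · exact absurd (h ▸ hv) hyA
      · exact h
    · exact ⟨cur, hcur, v, hv, hch.1⟩

lemma list_get_congr {V : Type*} (l : List V) {i j : ℕ} (hi : i < l.length) (hj : j < l.length)
    (h : i = j) : l.get ⟨i, hi⟩ = l.get ⟨j, hj⟩ := by subst h; rfl

/-- Build a cycle through `S` from a closed nodup arc-chain containing `S`. -/
lemma cycleThrough_of_list {V : Type*} (D : Dgr V) (l : List V) (h2 : 2 ≤ l.length)
    (hnd : l.Nodup) (hch : l.Chain' D.Arc) (hne : l ≠ [])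
    (hcl : D.Arc (l.getLast hne) (l.head hne)) (S : Set V)
    (hS : ∀ v ∈ S, v ∈ l) : D.CycleThrough S := by
  haveI : NeZero l.length := ⟨by omega⟩
  haveI : Fact (1 < l.length) := ⟨by omega⟩
  refine ⟨l.length, fun i => l.get ⟨i.val, i.val_lt⟩, ⟨h2, ?_, ?_⟩, ?_⟩
  · intro i j hij
    have := (List.nodup_iff_injective_get.mp hnd) hij
    exact ZMod.val_injective l.length (congrArg Fin.val this)
  · intro i
    have hv : (i + 1).val = (i.val + 1) % l.length := by
      rw [ZMod.val_add, ZMod.val_one]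
    have hlt : i.val < l.length := i.val_lt
    rcases Nat.lt_or_ge (i.val + 1) l.length with h | h
    · have hv' : (i + 1).val = i.val + 1 := by rw [hv, Nat.mod_eq_of_lt h]
      have := List.isChain_iff_getElem.mp hch i.val (by omega)
      show D.Arc (l.get ⟨i.val, _⟩) (l.get ⟨(i+1).val, _⟩)
      rw [list_get_congr l (i+1).val_lt (by omega) hv']
      exact this
    · have hik : i.val = l.length - 1 := by omega
      have hv' : (i + 1).val = 0 := by
        rw [hv]
        have : i.val + 1 = l.length := by omega
        rw [this, Nat.mod_self]
      show D.Arc (l.get ⟨i.val, _⟩) (l.get ⟨(i+1).val, _⟩)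
      have e1 : l.get ⟨i.val, i.val_lt⟩ = l.getLast hne := by
        rw [List.getLast_eq_getElem, List.get_eq_getElem]
        exact (list_get_congr l _ _ hik : _)
      have e2 : l.get ⟨(i+1).val, (i+1).val_lt⟩ = l.head hne := by
        rw [List.head_eq_getElem_zero hne, List.get_eq_getElem]
        congr 1
      rw [e1, e2]
      exact hcl
  · intro v hv
    obtain ⟨⟨i, hi⟩, hgi⟩ := List.mem_iff_get.mp (hS v hv)
    refine ⟨(i : ZMod l.length), ?_⟩
    show l.get ⟨((i : ZMod l.length)).val, _⟩ = v
    rw [list_get_congr l _ hi (ZMod.val_cast_of_lt hi)]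
    exact hgi

/-- A 2-strong digraph is strong. -/
lemma twoStrong_strong {V : Type*} [Fintype V] {D : Dgr V} (h : D.TwoStrong) :
    ∀ u v : V, u ≠ v → Relation.TransGen D.Arc u v := by
  classical
  intro u v huv
  have h3 := h.1
  have hne : (({u, v} : Finset V)ᶜ).Nonempty := by
    rw [← Finset.card_pos, Finset.card_compl]
    have h2 : ({u, v} : Finset V).card ≤ 2 := by
      apply le_trans (Finset.card_insert_le _ _)
      simp
    omega
  obtain ⟨w, hw⟩ := hne
  simp only [Finset.mem_compl, Finset.mem_insert, Finset.mem_singleton, not_or] at hw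
  have hs := h.2 w ⟨u, fun he => hw.1 he.symm⟩ ⟨v, fun he => hw.2 he.symm⟩
    (fun hc => huv (congrArg Subtype.val hc))
  exact Relation.TransGen.lift Subtype.val (fun a b hab => hab) _ _ hs

lemma inter_nonempty_of_ncard {V : Type*} [Fintype V] {A B W : Set V} (hA : A ⊆ W) (hB : B ⊆ W)
    (h : W.ncard < A.ncard + B.ncard) : (A ∩ B).Nonempty := by
  have h1 := Set.ncard_union_add_ncard_inter A B (Set.toFinite _) (Set.toFinite _)
  have h2 : (A ∪ B).ncard ≤ W.ncard := Set.ncard_le_ncard (Set.union_subset hA hB) (Set.toFinite _)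
  exact Set.nonempty_of_ncard_ne_zero (by omega)

end AuxLemmas

/-- **Theorem 1.** Let `D` be a 2-strong digraph of order `n = 2m+1 ≥ 3`. Then any two
`T`-vertices `x` and `y` lie on a common directed cycle of `D`. -/
theorem statement0 {V : Type*} [Fintype V] (m : ℕ) (D : Dgr V)
    (hcard : Fintype.card V = 2 * m + 1) (hn : 3 ≤ Fintype.card V)
    (h2strong : D.TwoStrong)
    (x y : V) (hx : D.TVertex m x) (hy : D.TVertex m y) :
    D.CycleThrough {x, y} := by
  classical
  have hm : 1 ≤ m := by omega
  have hstrong := twoStrong_strong h2strong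
  by_cases hxy : x = y
  · subst hxy
    have hA : {v | D.Arc x v}.Nonempty := by
      apply Set.nonempty_of_ncard_ne_zero
      have h1 : m ≤ {v | D.Arc x v}.ncard := hx.1
      omega
    obtain ⟨z, hz⟩ := hA
    have hzx : z ≠ x := fun h => D.loopless x (by rw [h] at hz; exact hz)
    obtain ⟨l, hc, hlast, hnd⟩ := exists_simple_path (hstrong z x hzx)
    have hlne : (z :: l) ≠ [] := List.cons_ne_nil _ _
    have hlast' : (z :: l).getLast hlne = x := by
      rw [List.getLast?_eq_getLast_of_ne_nil hlne] at hlast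
      exact Option.some_injective _ hlast
    have hxmem : x ∈ z :: l := hlast' ▸ List.getLast_mem hlne
    have hlen : 2 ≤ (z :: l).length := by
      cases l with
      | nil => simp at hlast'; exact absurd hlast' hzx
      | cons c t => simp
    apply cycleThrough_of_list D (z :: l) hlen hnd hc hlne ?_ _ ?_
    · rw [hlast', List.head_cons]; exact hz
    · intro v hv
      have : v = x := by simpa using hv
      rw [this]; exact hxmem
  · by_cases hxy1 : D.Arc x y
    · obtain ⟨l, hc, hlast, hnd⟩ := exists_simple_path (hstrong y x (Ne.symm hxy))
      have hlne : (y :: l) ≠ [] := List.cons_ne_nil _ _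
      have hlast' : (y :: l).getLast hlne = x := by
        rw [List.getLast?_eq_getLast_of_ne_nil hlne] at hlast
        exact Option.some_injective _ hlast
      have hxmem : x ∈ y :: l := hlast' ▸ List.getLast_mem hlne
      have hlen : 2 ≤ (y :: l).length := by
        cases l with
        | nil => simp at hlast'; exact absurd hlast'.symm hxy
        | cons c t => simp
      apply cycleThrough_of_list D (y :: l) hlen hnd hc hlne ?_ _ ?_
      · rw [hlast', List.head_cons]; exact hxy1
      · intro v hv
        rcases (by simpa using hv : v = x ∨ v = y) with h | h
        · rw [h]; exact hxmem
        · rw [h]; exact List.mem_cons_self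
    · by_cases hxy2 : D.Arc y x
      · obtain ⟨l, hc, hlast, hnd⟩ := exists_simple_path (hstrong x y hxy)
        have hlne : (x :: l) ≠ [] := List.cons_ne_nil _ _
        have hlast' : (x :: l).getLast hlne = y := by
          rw [List.getLast?_eq_getLast_of_ne_nil hlne] at hlast
          exact Option.some_injective _ hlast
        have hymem : y ∈ x :: l := hlast' ▸ List.getLast_mem hlne
        have hlen : 2 ≤ (x :: l).length := by
          cases l with
          | nil => simp at hlast'; exact absurd hlast' hxy
          | cons c t => simp
        apply cycleThrough_of_list D (x :: l) hlen hnd hc hlne ?_ _ ?_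
        · rw [hlast', List.head_cons]; exact hxy2
        · intro v hv
          rcases (by simpa using hv : v = x ∨ v = y) with h | h
          · rw [h]; exact List.mem_cons_self
          · rw [h]; exact hymem
      · -- x and y are nonadjacent
        set W : Set V := ({x, y} : Set V)ᶜ with hWdef
        have hWcard : W.ncard = 2 * m - 1 := by
          have h1 : ({x, y} : Set V).ncard = 2 := Set.ncard_pair hxy
          have h2 := Set.ncard_add_ncard_compl ({x, y} : Set V) (Set.toFinite _) (Set.toFinite _)
          rw [Nat.card_eq_fintype_card, hcard, h1, ← hWdef] at h2
          omega
        have hmemW : ∀ v : V, v ≠ x → v ≠ y → v ∈ W := by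
          intro v h1 h2
          simp [hWdef, h1, h2]
        have hAW : {v | D.Arc x v} ⊆ W := fun v hv =>
          hmemW v (fun h => D.loopless x (by rw [h] at hv; exact hv))
            (fun h => hxy1 (by rw [h] at hv; exact hv))
        have hBW : {v | D.Arc v y} ⊆ W := fun v hv =>
          hmemW v (fun h => hxy1 (by rw [h] at hv; exact hv))
            (fun h => D.loopless y (by rw [h] at hv; exact hv))
        have hCW : {v | D.Arc y v} ⊆ W := fun v hv =>
          hmemW v (fun h => hxy2 (by rw [h] at hv; exact hv))
            (fun h => D.loopless y (by rw [h] at hv; exact hv))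
        have hEW : {v | D.Arc v x} ⊆ W := fun v hv =>
          hmemW v (fun h => D.loopless x (by rw [h] at hv; exact hv))
            (fun h => hxy2 (by rw [h] at hv; exact hv))
        have hABne : ({v | D.Arc x v} ∩ {v | D.Arc v y}).Nonempty := by
          apply inter_nonempty_of_ncard hAW hBW
          have h1 : m ≤ {v | D.Arc x v}.ncard := hx.1
          have h2 : m ≤ {v | D.Arc v y}.ncard := hy.2
          rw [hWcard]
          omega
        have hCEne : ({v | D.Arc y v} ∩ {v | D.Arc v x}).Nonempty := by
          apply inter_nonempty_of_ncard hCW hEW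
          have h1 : m ≤ {v | D.Arc y v}.ncard := hy.1
          have h2 : m ≤ {v | D.Arc v x}.ncard := hx.2
          rw [hWcard]
          omega
        obtain ⟨u, huA, huB⟩ := hABne
        obtain ⟨w, hwC, hwE⟩ := hCEne
        by_cases h4 : ∃ p, (D.Arc x p ∧ D.Arc p y) ∧ ∃ q, (D.Arc y q ∧ D.Arc q x) ∧ p ≠ q
        · -- a 4-cycle x p y q
          obtain ⟨p, hp, q, hq, hpq⟩ := h4
          have hpW : p ≠ x ∧ p ≠ y := by
            have := hAW hp.1
            simpa [hWdef, not_or] using this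
          have hqW : q ≠ x ∧ q ≠ y := by
            have := hCW hq.1
            simpa [hWdef, not_or] using this
          apply cycleThrough_of_list D [x, p, y, q] (by simp) ?_ ?_ (by simp) ?_ _ ?_
          · simp only [List.nodup_cons, List.mem_cons, List.mem_singleton,
              List.not_mem_nil, or_false, not_or, List.nodup_nil, not_false_iff, and_true]
            exact ⟨⟨Ne.symm hpW.1, hxy, Ne.symm hqW.1⟩, ⟨hpW.2, hpq⟩, Ne.symm hqW.2⟩
          · simp only [List.Chain', List.isChain_cons_cons, List.isChain_singleton, and_true]
            exact ⟨hp.1, hp.2, hq.1⟩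
          · show D.Arc q x
            exact hq.2
          · intro v hv
            rcases (by simpa using hv : v = x ∨ v = y) with h | h <;> simp [h]
        · push_neg at h4
          have huw : u = w := h4 u ⟨huA, huB⟩ w ⟨hwC, hwE⟩
          subst huw
          have hforce : ∀ p, D.Arc x p → D.Arc p y → p = u :=
            fun p h1 h2 => h4 p ⟨h1, h2⟩ u ⟨hwC, hwE⟩
          have hABu : {v | D.Arc x v} ∩ {v | D.Arc v y} ⊆ {u} :=
            fun p hp => hforce p hp.1 hp.2
          have hunion : {v | D.Arc x v} ∪ {v | D.Arc v y} = W := by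
            apply Set.eq_of_subset_of_ncard_le (Set.union_subset hAW hBW) ?_ (Set.toFinite _)
            have h1 := Set.ncard_union_add_ncard_inter {v | D.Arc x v} {v | D.Arc v y}
              (Set.toFinite _) (Set.toFinite _)
            have h2 : ({v | D.Arc x v} ∩ {v | D.Arc v y}).ncard ≤ 1 := by
              have := Set.ncard_le_ncard hABu (Set.toFinite _)
              simpa using this
            have h5 : m ≤ {v | D.Arc x v}.ncard := hx.1
            have h6 : m ≤ {v | D.Arc v y}.ncard := hy.2
            rw [hWcard]
            omega
          have hxu : x ≠ u := fun h => D.loopless x (by rw [← h] at huA; exact huA)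
          have hyu : y ≠ u := fun h => D.loopless y (by rw [← h] at huB; exact huB)
          have hres := h2strong.2 u ⟨x, hxu⟩ ⟨y, hyu⟩ (fun hc => hxy (congrArg Subtype.val hc))
          have hT : Relation.TransGen (fun a b => D.Arc a b ∧ a ≠ u ∧ b ≠ u) x y :=
            Relation.TransGen.lift Subtype.val (fun a b hab => ⟨hab, a.2, b.2⟩) _ _ hres
          obtain ⟨l, hc, hlast, hnd⟩ := exists_simple_path hT
          cases l with
          | nil => exact absurd (by simpa using hlast) hxy
          | cons a₁ rest =>
            rw [List.Chain, List.isChain_cons_cons] at hc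
            have ha₁ : a₁ ∈ {v | D.Arc x v ∧ v ≠ u} := ⟨hc.1.1, hc.1.2.2⟩
            have hyA' : y ∉ {v | D.Arc x v ∧ v ≠ u} := fun h => hxy1 h.1
            have hymem : y ∈ a₁ :: rest := by
              have hym : y ∈ x :: a₁ :: rest := List.mem_of_getLast? hlast
              rcases List.mem_cons.mp hym with h | h
              · exact absurd h.symm hxy
              · exact h
            have hyrest : y ∈ rest := by
              rcases List.mem_cons.mp hymem with h | h
              · exact absurd (h ▸ ha₁) hyA'
              · exact h
            have hmem : ∀ w ∈ rest,
                w = y ∨ w ∈ {v | D.Arc x v ∧ v ≠ u} ∨ w ∈ {v | D.Arc v y ∧ v ≠ u} := by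
              intro w hw
              by_cases hwy : w = y
              · exact Or.inl hwy
              right
              have hwu : w ≠ u := chain_forall_aux (fun a b hab => hab.2.2) rest a₁ hc.2 w hw
              have hwx : w ≠ x := by
                intro h
                subst h
                exact (List.nodup_cons.mp hnd).1 (List.mem_cons_of_mem _ hw)
              have hwW : w ∈ W := hmemW w hwx hwy
              rw [← hunion] at hwW
              rcases hwW with h | h
              · exact Or.inl ⟨h, hwu⟩
              · exact Or.inr ⟨h, hwu⟩
            have hstep : ∀ a ∈ {v | D.Arc x v ∧ v ≠ u},
                ¬ (fun a b => D.Arc a b ∧ a ≠ u ∧ b ≠ u) a y := by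
              intro a ha hr
              exact ha.2 (hforce a ha.1 hr.1)
            obtain ⟨a, haA, b, hbB, hab⟩ :=
              cross_lemma hyA' hstep rest a₁ ha₁ hc.2 hyrest hmem
            -- the 5-cycle x a b y u
            have hax : a ≠ x := fun h => D.loopless x (by rw [h] at haA; exact haA.1)
            have hay : a ≠ y := fun h => hxy1 (by rw [h] at haA; exact haA.1)
            have hbx : b ≠ x := fun h => hxy1 (by rw [h] at hbB; exact hbB.1)
            have hby : b ≠ y := fun h => D.loopless y (by rw [h] at hbB; exact hbB.1)
            have habne : a ≠ b := by
              intro h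
              apply haA.2
              apply hforce a haA.1
              rw [h]
              exact hbB.1
            apply cycleThrough_of_list D [x, a, b, y, u] (by simp) ?_ ?_ (by simp) ?_ _ ?_
            · simp only [List.nodup_cons, List.mem_cons, List.mem_singleton,
                List.not_mem_nil, or_false, not_or, List.nodup_nil, not_false_iff, and_true]
              exact ⟨⟨Ne.symm hax, Ne.symm hbx, hxy, hxu⟩, ⟨habne, hay, haA.2⟩,
                ⟨hby, hbB.2⟩, hyu⟩
            · simp only [List.Chain', List.isChain_cons_cons, List.isChain_singleton, and_true]
              exact ⟨haA.1, hab.1, hbB.1, hwC⟩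
            · show D.Arc u x
              exact hwE
            · intro v hv
              rcases (by simpa using hv : v = x ∨ v = y) with h | h <;> simp [h]
end

section
/- Let D be a digraph on n ≥ 3 vertices containing a cycle C of length ℓ with 2 ≤ ℓ ≤ n−1, and let x be a vertex not on C. If d(x, V(C)) ≥ ℓ + 1, then D contains a cycle of length k for every k with 2 ≤ k ≤ ℓ + 1. -/
/-- **Lemma 1.** Let `D` be a digraph on `n ≥ 3` vertices containing a cycle `C` of length
`ℓ`, `2 ≤ ℓ ≤ n-1`, and let `x` be a vertex not on `C`. If `d(x, V(C)) ≥ ℓ + 1`, then `D`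
contains a cycle of length `k` for every `k` with `2 ≤ k ≤ ℓ + 1`. -/
theorem statement2 {V : Type*} [Fintype V] (D : Dgr V) (hn : 3 ≤ Fintype.card V)
    (ℓ : ℕ) (hℓ : ℓ ≤ Fintype.card V - 1)
    (c : ZMod ℓ → V) (hc : D.IsCycle c)
    (x : V) (hx : x ∉ Set.range c)
    (hdeg : ℓ + 1 ≤ D.degOn x (Set.range c)) :
    ∀ k, 2 ≤ k → k ≤ ℓ + 1 → ∃ c' : ZMod k → V, D.IsCycle c' := by
  classical
  obtain ⟨hℓ2, hcinj, harc⟩ := hc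
  haveI : NeZero ℓ := ⟨by omega⟩
  intro k hk2 hkℓ
  haveI : NeZero k := ⟨by omega⟩
  haveI : Fact (1 < k) := ⟨by omega⟩
  set A : Finset (ZMod ℓ) := Finset.univ.filter (fun i => D.Arc x (c i)) with hAdef
  set B : Finset (ZMod ℓ) := Finset.univ.filter (fun i => D.Arc (c i) x) with hBdef
  have hA : D.outDegOn x (Set.range c) = A.card := by
    rw [Dgr.outDegOn]
    have heq : {v ∈ Set.range c | D.Arc x v} = c '' ↑A := by
      ext v
      constructor
      · rintro ⟨⟨i, rfl⟩, h⟩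
        exact ⟨i, by simp [hAdef, h], rfl⟩
      · rintro ⟨i, hi, rfl⟩
        simp only [hAdef, Finset.coe_filter, Set.mem_setOf_eq] at hi
        exact ⟨⟨i, rfl⟩, hi.2⟩
    rw [heq, Set.ncard_image_of_injective _ hcinj, Set.ncard_coe_finset]
  have hB : D.inDegOn x (Set.range c) = B.card := by
    rw [Dgr.inDegOn]
    have heq : {v ∈ Set.range c | D.Arc v x} = c '' ↑B := by
      ext v
      constructor
      · rintro ⟨⟨i, rfl⟩, h⟩
        exact ⟨i, by simp [hBdef, h], rfl⟩
      · rintro ⟨i, hi, rfl⟩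
        simp only [hBdef, Finset.coe_filter, Set.mem_setOf_eq] at hi
        exact ⟨⟨i, rfl⟩, hi.2⟩
    rw [heq, Set.ncard_image_of_injective _ hcinj, Set.ncard_coe_finset]
  set s : ZMod ℓ := ((k - 2 : ℕ) : ZMod ℓ) with hsdef
  set B' : Finset (ZMod ℓ) := B.image (fun i => i - s) with hB'def
  have hB' : B'.card = B.card := Finset.card_image_of_injective _ (sub_left_injective)
  have hcards : ℓ + 1 ≤ A.card + B'.card := by
    rw [hB', ← hA, ← hB]; exact hdeg
  have hinter : (A ∩ B').Nonempty := by
    by_contra h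
    rw [Finset.not_nonempty_iff_eq_empty] at h
    have h1 : (A ∪ B').card = A.card + B'.card := by
      rw [Finset.card_union_of_disjoint (Finset.disjoint_iff_inter_eq_empty.mpr h)]
    have h2 : (A ∪ B').card ≤ Fintype.card (ZMod ℓ) := Finset.card_le_univ _
    rw [ZMod.card] at h2
    omega
  obtain ⟨j, hj⟩ := hinter
  rw [Finset.mem_inter] at hj
  have hjA : D.Arc x (c j) := by
    have := hj.1; rw [hAdef, Finset.mem_filter] at this; exact this.2
  have hjB : D.Arc (c (j + s)) x := by
    have := hj.2
    rw [hB'def, Finset.mem_image] at this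
    obtain ⟨i, hi, hie⟩ := this
    rw [hBdef, Finset.mem_filter] at hi
    have : i = j + s := by rw [← hie]; ring
    rw [← this]; exact hi.2
  -- build the cycle of length k
  refine ⟨fun i => if i = 0 then x else c (j + ((i.val - 1 : ℕ) : ZMod ℓ)), hk2, ?_, ?_⟩
  · intro i₁ i₂ h
    by_cases h1 : i₁ = 0 <;> by_cases h2 : i₂ = 0 <;> simp [h1, h2] at h ⊢
    · exact absurd (⟨_, h.symm⟩ : x ∈ Set.range c) hx
    · exact absurd (⟨_, h⟩ : x ∈ Set.range c) hx
    · have hval1 : 1 ≤ i₁.val := by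
        have := ZMod.val_pos.mpr h1; omega
      have hval2 : 1 ≤ i₂.val := by
        have := ZMod.val_pos.mpr h2; omega
      have hlt1 : i₁.val - 1 < ℓ := by have := i₁.val_lt; omega
      have hlt2 : i₂.val - 1 < ℓ := by have := i₂.val_lt; omega
      have heq := add_right_injective j (hcinj h)
      have : i₁.val - 1 = i₂.val - 1 := by
        have := congrArg ZMod.val (show ((i₁.val - 1 : ℕ) : ZMod ℓ) = ((i₂.val - 1 : ℕ) : ZMod ℓ) by
          rw [Nat.cast_sub hval1, Nat.cast_sub hval2, ZMod.natCast_val, ZMod.natCast_val, Nat.cast_one]; exact heq)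
        rwa [ZMod.val_cast_of_lt hlt1, ZMod.val_cast_of_lt hlt2] at this
      have : i₁.val = i₂.val := by omega
      exact ZMod.val_injective k this
  · intro i
    have hneg : (-1 : ZMod k).val = k - 1 := by
      obtain ⟨m, rfl⟩ : ∃ m, k = m + 1 := ⟨k - 1, by omega⟩
      simpa using ZMod.val_neg_one m
    by_cases h0 : i = 0
    · subst h0
      have h1ne : (0 + 1 : ZMod k) ≠ 0 := by
        rw [zero_add]
        intro h
        have := congrArg ZMod.val h
        rw [ZMod.val_one k, ZMod.val_zero] at this
        omega
      simp only [if_pos rfl, if_neg h1ne]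
      have : ((0 + 1 : ZMod k).val - 1 : ℕ) = 0 := by
        rw [zero_add, ZMod.val_one k]
      rw [this]
      simpa using hjA
    · by_cases h1 : i + 1 = 0
      · have hi1 : i = -1 := by
          have := eq_neg_of_add_eq_zero_left h1
          simpa using this
        simp only [if_neg h0, if_pos h1]
        have : (i.val - 1 : ℕ) = k - 2 := by rw [hi1, hneg]; omega
        rw [this]
        exact hjB
      · simp only [if_neg h0, if_neg h1]
        have hval : 1 ≤ i.val := ZMod.val_pos.mpr h0
        have hvlt : i.val < k := i.val_lt
        have hvne : i.val ≠ k - 1 := by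
          intro h
          apply h1
          have : i = -1 := ZMod.val_injective k (by rw [h, hneg])
          rw [this]; ring
        have hsucc : (i + 1).val = i.val + 1 := by
          have : i.val + (1 : ZMod k).val < k := by
            rw [ZMod.val_one k]; omega
          rw [ZMod.val_add_of_lt this, ZMod.val_one k]
        rw [hsucc]
        have hstep : ((i.val + 1 - 1 : ℕ) : ZMod ℓ) = ((i.val - 1 : ℕ) : ZMod ℓ) + 1 := by
          have h1 : (i.val + 1 - 1 : ℕ) = (i.val - 1) + 1 := by omega
          rw [h1, Nat.cast_add, Nat.cast_one]
        rw [hstep, ← add_assoc]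
        exact harc _
end

section
/- Let D be a digraph on n ≥ 3 vertices containing a path P = x_1x_2…x_ℓ with 2 ≤ ℓ ≤ n−1, and let x be a vertex not on P. Suppose one of the following holds: (i) d(x, V(P)) ≥ ℓ + 2; (ii) d(x, V(P)) ≥ ℓ + 1 and (the arc x x_1 is absent or the arc x_ℓ x is absent); (iii) d(x, V(P)) ≥ ℓ, the arc x x_1 is absent, and the arc x_ℓ x is absent. Then there exists i ∈ [1, ℓ−1] such that both arcs x_i x and x x_{i+1} are present in D, i.e., D contains the path x_1x_2…x_i x x_{i+1}…x_ℓ of length ℓ (x can be inserted into P). -/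
/-- **Lemma 2.** Let `D` be a digraph on `n ≥ 3` vertices containing a path
`P = x_1 x_2 ⋯ x_ℓ`, `2 ≤ ℓ ≤ n-1`, and let `x` be a vertex not on `P`. If
(i) `d(x, V(P)) ≥ ℓ + 2`, or
(ii) `d(x, V(P)) ≥ ℓ + 1` and (`x x_1 ∉ D` or `x_ℓ x ∉ D`), or
(iii) `d(x, V(P)) ≥ ℓ` and `x x_1 ∉ D` and `x_ℓ x ∉ D`,
then there is an `i ∈ [1, ℓ-1]` with `x_i x, x x_{i+1} ∈ D`, i.e. `x` can be inserted
into `P`, giving the path `x_1 ⋯ x_i x x_{i+1} ⋯ x_ℓ` of length `ℓ`. -/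
theorem statement3 {V : Type*} [Fintype V] (D : Dgr V) (hn : 3 ≤ Fintype.card V)
    (ℓ : ℕ) (hℓ2 : 2 ≤ ℓ) (hℓ : ℓ ≤ Fintype.card V - 1)
    (p : Fin ℓ → V) (hinj : Function.Injective p)
    (hpath : ∀ i : Fin ℓ, (h : i.val + 1 < ℓ) → D.Arc (p i) (p ⟨i.val + 1, h⟩))
    (x : V) (hx : x ∉ Set.range p)
    (hcond :
      (ℓ + 2 ≤ D.degOn x (Set.range p)) ∨
      (ℓ + 1 ≤ D.degOn x (Set.range p) ∧
        (¬ D.Arc x (p ⟨0, by omega⟩) ∨ ¬ D.Arc (p ⟨ℓ - 1, by omega⟩) x)) ∨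
      (ℓ ≤ D.degOn x (Set.range p) ∧
        ¬ D.Arc x (p ⟨0, by omega⟩) ∧ ¬ D.Arc (p ⟨ℓ - 1, by omega⟩) x)) :
    ∃ i : ℕ, ∃ h : i + 1 < ℓ,
      D.Arc (p ⟨i, by omega⟩) x ∧ D.Arc x (p ⟨i + 1, h⟩) := by
  classical
  by_contra hcon
  push_neg at hcon
  have hℓpos : 0 < ℓ := by omega
  set z0 : Fin ℓ := ⟨0, hℓpos⟩ with hz0
  set zl : Fin ℓ := ⟨ℓ - 1, by omega⟩ with hzl
  set A : Finset (Fin ℓ) := Finset.univ.filter (fun i => D.Arc x (p i)) with hA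
  set B : Finset (Fin ℓ) := Finset.univ.filter (fun i => D.Arc (p i) x) with hB
  -- degOn equals A.card + B.card
  have hout : D.outDegOn x (Set.range p) = A.card := by
    have h1 : {v ∈ Set.range p | D.Arc x v} = p '' {i | D.Arc x (p i)} := by
      ext v
      constructor
      · rintro ⟨⟨i, rfl⟩, hv⟩; exact ⟨i, hv, rfl⟩
      · rintro ⟨i, hi, rfl⟩; exact ⟨⟨i, rfl⟩, hi⟩
    rw [Dgr.outDegOn, h1, Set.ncard_image_of_injective _ hinj,
      Set.ncard_eq_toFinset_card', Set.toFinset_setOf]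
  have hin : D.inDegOn x (Set.range p) = B.card := by
    have h1 : {v ∈ Set.range p | D.Arc v x} = p '' {i | D.Arc (p i) x} := by
      ext v
      constructor
      · rintro ⟨⟨i, rfl⟩, hv⟩; exact ⟨i, hv, rfl⟩
      · rintro ⟨i, hi, rfl⟩; exact ⟨⟨i, rfl⟩, hi⟩
    rw [Dgr.inDegOn, h1, Set.ncard_image_of_injective _ hinj,
      Set.ncard_eq_toFinset_card', Set.toFinset_setOf]
  have hdeg : D.degOn x (Set.range p) = A.card + B.card := by
    rw [Dgr.degOn, hout, hin]
  -- the shifted copy of B₀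
  set B0 : Finset (Fin ℓ) := B.filter (fun i => i.val + 1 < ℓ) with hB0
  set g : Fin ℓ → Fin ℓ := fun i => if h : i.val + 1 < ℓ then ⟨i.val + 1, h⟩ else i with hg
  have hgval : ∀ i ∈ B0, ∀ (h : i.val + 1 < ℓ), g i = ⟨i.val + 1, h⟩ := by
    intro i hi h; simp [hg, h]
  have hcard_im : (B0.image g).card = B0.card := by
    apply Finset.card_image_of_injOn
    intro i hi j hj hij
    have hi' : i.val + 1 < ℓ := (Finset.mem_filter.mp hi).2
    have hj' : j.val + 1 < ℓ := (Finset.mem_filter.mp hj).2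
    rw [hgval i hi hi', hgval j hj hj'] at hij
    have : i.val + 1 = j.val + 1 := congrArg Fin.val hij
    exact Fin.ext (by omega)
  have hdisj : Disjoint (A.erase z0) (B0.image g) := by
    rw [Finset.disjoint_left]
    intro k hk hk2
    obtain ⟨i, hi, rfl⟩ := Finset.mem_image.mp hk2
    have hi1 : i.val + 1 < ℓ := (Finset.mem_filter.mp hi).2
    have hiB : D.Arc (p i) x := (Finset.mem_filter.mp (Finset.mem_filter.mp hi).1).2
    rw [hgval i hi hi1] at hk
    have hkA : D.Arc x (p ⟨i.val + 1, hi1⟩) :=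
      (Finset.mem_filter.mp (Finset.mem_erase.mp hk).2).2
    refine hcon i.val hi1 ?_ hkA
    have hieq : (⟨i.val, by omega⟩ : Fin ℓ) = i := Fin.ext rfl
    rw [hieq]; exact hiB
  have hsub : (A.erase z0) ∪ (B0.image g) ⊆ Finset.univ.erase z0 := by
    intro k hk
    rcases Finset.mem_union.mp hk with hk | hk
    · exact Finset.mem_erase.mpr ⟨(Finset.mem_erase.mp hk).1, Finset.mem_univ _⟩
    · obtain ⟨i, hi, rfl⟩ := Finset.mem_image.mp hk
      have hi1 : i.val + 1 < ℓ := (Finset.mem_filter.mp hi).2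
      rw [hgval i hi hi1]
      refine Finset.mem_erase.mpr ⟨?_, Finset.mem_univ _⟩
      intro h
      have : i.val + 1 = 0 := congrArg Fin.val h
      omega
  have hmain : (A.erase z0).card + B0.card ≤ ℓ - 1 := by
    have h1 := Finset.card_le_card hsub
    rw [Finset.card_union_of_disjoint hdisj, hcard_im] at h1
    have h2 : (Finset.univ.erase z0).card = ℓ - 1 := by
      rw [Finset.card_erase_of_mem (Finset.mem_univ _)]
      simp
    omega
  -- A.card ≤ (A.erase z0).card + e1
  have hAbound : A.card ≤ (A.erase z0).card + (if D.Arc x (p z0) then 1 else 0) := by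
    by_cases h : D.Arc x (p z0)
    · simp only [h, if_pos]
      have : A ⊆ insert z0 (A.erase z0) := by
        intro i hi
        by_cases hiz : i = z0
        · subst hiz; exact Finset.mem_insert_self _ _
        · exact Finset.mem_insert_of_mem (Finset.mem_erase.mpr ⟨hiz, hi⟩)
      calc A.card ≤ (insert z0 (A.erase z0)).card := Finset.card_le_card this
        _ ≤ (A.erase z0).card + 1 := Finset.card_insert_le _ _
    · simp only [h, if_neg, not_false_iff, add_zero]
      have : A.erase z0 = A := by
        apply Finset.erase_eq_of_notMem
        intro hz; exact h (Finset.mem_filter.mp hz).2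
      rw [this]
  have hBbound : B.card ≤ B0.card + (if D.Arc (p zl) x then 1 else 0) := by
    have hBsub : B ⊆ insert zl B0 := by
      intro i hi
      by_cases h : i.val + 1 < ℓ
      · exact Finset.mem_insert_of_mem (Finset.mem_filter.mpr ⟨hi, h⟩)
      · have : i = zl := Fin.ext (by have := i.isLt; simp [hzl]; omega)
        subst this; exact Finset.mem_insert_self _ _
    by_cases h : D.Arc (p zl) x
    · simp only [h, if_pos]
      calc B.card ≤ (insert zl B0).card := Finset.card_le_card hBsub
        _ ≤ B0.card + 1 := Finset.card_insert_le _ _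
    · simp only [h, if_neg, not_false_iff, add_zero]
      apply Finset.card_le_card
      intro i hi
      have := hBsub hi
      rcases Finset.mem_insert.mp this with h' | h'
      · exfalso; subst h'; exact h (Finset.mem_filter.mp hi).2
      · exact h'
  rw [hdeg] at hcond
  rcases hcond with h | ⟨h, h'⟩ | ⟨h, h1, h2⟩
  · split_ifs at hAbound hBbound <;> omega
  · rcases h' with h' | h'
    · rw [if_neg (fun hh => h' hh)] at hAbound
      split_ifs at hBbound <;> omega
    · rw [if_neg (fun hh => h' hh)] at hBbound
      split_ifs at hAbound <;> omega
  · rw [if_neg (fun hh => h1 hh)] at hAbound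
    rw [if_neg (fun hh => h2 hh)] at hBbound
    omega
end

section
/- Let D be a strong digraph of order n = 2m+1 ≥ 5 that contains no cycle passing through all of its T-vertices, let C = x_1x_2…x_{n−1}x_1 be a cycle of length n−1 in D, let x be the unique vertex of D not on C, and suppose x and x_{n−1} are not adjacent; write y = x_{n−1} and p = n−2. Suppose the arcs x_{p−1}x and y x_p are present in D, and suppose for some k ∈ [2, p−2] the vertices x_k and y are not adjacent. Then x_k and x_p are not adjacent. -/
lemma cycleThrough_of_list_s6 {V : Type*} (D : Dgr V) (S : Set V) (L : List V)
    (h2 : 2 ≤ L.length) (hnd : L.Nodup) (hchain : L.Chain' D.Arc)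
    (hlast : ∀ u ∈ L.getLast?, ∀ w ∈ L.head?, D.Arc u w)
    (hS : ∀ v ∈ S, v ∈ L) : D.CycleThrough S := by
  haveI : NeZero L.length := ⟨by omega⟩
  haveI : Fact (1 < L.length) := ⟨by omega⟩
  have hLne : L ≠ [] := by
    intro h; rw [h] at h2; simp at h2
  refine ⟨L.length, fun i => L.get ⟨i.val, ZMod.val_lt i⟩, ⟨h2, ?_, ?_⟩, ?_⟩
  · intro i j hij
    have h := List.nodup_iff_injective_get.1 hnd hij
    have : i.val = j.val := congrArg Fin.val h
    exact ZMod.val_injective _ this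
  · intro i
    have hv : (i + 1).val = (i.val + 1) % L.length := by
      rw [ZMod.val_add, ZMod.val_one]
    show D.Arc (L.get ⟨i.val, ZMod.val_lt i⟩) (L.get ⟨(i+1).val, ZMod.val_lt _⟩)
    rcases lt_or_ge (i.val + 1) L.length with hlt | hge
    · have hv' : (i + 1).val = i.val + 1 := by rw [hv, Nat.mod_eq_of_lt hlt]
      have := List.isChain_iff_getElem.1 hchain i.val (by omega)
      convert this using 2
      all_goals simp [hv']
    · have hE : i.val + 1 = L.length := by have := ZMod.val_lt i; omega
      have hv' : (i + 1).val = 0 := by rw [hv, hE, Nat.mod_self]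
      have hg : L.get ⟨i.val, ZMod.val_lt i⟩ = L.getLast hLne := by
        have h3 : (⟨i.val, ZMod.val_lt i⟩ : Fin L.length) = ⟨L.length - 1, by omega⟩ :=
          Fin.mk_eq_mk.mpr (by omega)
        rw [h3, List.getLast_eq_getElem, List.get_eq_getElem]
      have hh : L.get ⟨(i+1).val, ZMod.val_lt _⟩ = L.head hLne := by
        have h3 : (⟨(i+1).val, ZMod.val_lt _⟩ : Fin L.length) = ⟨0, by omega⟩ :=
          Fin.mk_eq_mk.mpr hv'
        rw [h3, List.get_eq_getElem, ← List.getElem_zero (by omega)]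
      rw [hg, hh]
      exact hlast _ (List.getLast?_eq_getLast hLne ▸ rfl) _ (List.head?_eq_head hLne ▸ rfl)
  · intro v hv
    obtain ⟨n, hn⟩ := List.mem_iff_get.1 (hS v hv)
    refine ⟨(n.val : ZMod L.length), ?_⟩
    have hval : ((n.val : ℕ) : ZMod L.length).val = n.val := ZMod.val_cast_of_lt n.isLt
    show L.get ⟨_, ZMod.val_lt _⟩ = v
    rw [← hn]
    congr 1
    exact Fin.mk_eq_mk.mpr hval
/-- `bnn b i = b i` for a natural index. -/
def bnn {V : Type*} {n : ℕ} (b : ZMod n → V) (i : ℕ) : V := b i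

lemma bnn_arc {V : Type*} {n : ℕ} {D : Dgr V} {b : ZMod n → V}
    (hb : ∀ i, D.Arc (b i) (b (i+1))) (i : ℕ) :
    D.Arc (bnn b i) (bnn b (i+1)) := by
  have := hb (i : ZMod n)
  simpa [bnn, Nat.cast_add, Nat.cast_one] using this

lemma bnn_inj {V : Type*} {n : ℕ} {b : ZMod n → V} (hb : Function.Injective b) {i j : ℕ}
    (hi : i < n) (hj : j < n) (h : bnn b i = bnn b j) : i = j := by
  have h1 : ((i : ℕ) : ZMod n) = j := hb h
  have h2 := (ZMod.natCast_eq_natCast_iff i j n).1 h1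
  rwa [Nat.ModEq, Nat.mod_eq_of_lt hi, Nat.mod_eq_of_lt hj] at h2

lemma chain_bnn {V : Type*} {n : ℕ} {D : Dgr V} {b : ZMod n → V}
    (hb : ∀ i, D.Arc (b i) (b (i+1))) :
    ∀ (N a : ℕ), List.Chain' D.Arc ((List.range' a N).map (bnn b))
  | 0, a => by simp [List.Chain']
  | 1, a => by simp [List.Chain']
  | (N+2), a => by
      rw [List.range'_succ, List.map_cons, List.range'_succ, List.map_cons,
        List.Chain', List.isChain_cons_cons]
      refine ⟨bnn_arc hb a, ?_⟩
      rw [← List.map_cons, ← List.range'_succ]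
      exact chain_bnn hb (N+1) (a+1)

lemma head_bnn {V : Type*} {n : ℕ} (b : ZMod n → V) (a N : ℕ) (h : 0 < N) :
    ((List.range' a N).map (bnn b)).head? = some (bnn b a) := by
  obtain ⟨N', rfl⟩ : ∃ N', N = N' + 1 := ⟨N - 1, by omega⟩
  rw [List.range'_succ, List.map_cons, List.head?_cons]

lemma last_bnn {V : Type*} {n : ℕ} (b : ZMod n → V) (a N : ℕ) (h : 0 < N) :
    ((List.range' a N).map (bnn b)).getLast? = some (bnn b (a + N - 1)) := by
  obtain ⟨N', rfl⟩ : ∃ N', N = N' + 1 := ⟨N - 1, by omega⟩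
  rw [List.range'_concat, List.map_append, List.map_singleton, List.getLast?_concat]
  simp

lemma count_core (m : ℕ) (A B : Finset ℕ) (hA : A ⊆ Finset.range (2*m))
    (hB : B ⊆ Finset.range (2*m)) (h0A : 0 ∉ A) (h0B : 0 ∉ B)
    (hdisj : ∀ j ∈ A, j - 1 ∉ B) (hcA : m ≤ A.card) (hcB : m ≤ B.card) :
    ∀ t, t < 2*m → t ∈ B ∨ t + 1 ∈ A := by
  classical
  set A' := A.image (· - 1) with hA'
  have hposA : ∀ j ∈ A, 1 ≤ j := by
    intro j hj; rcases Nat.eq_zero_or_pos j with rfl | h; exact absurd hj h0A; exact h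
  have hcardA' : A'.card = A.card := by
    apply Finset.card_image_of_injOn
    intro a ha c hc hac
    have h1 := hposA a ha; have h2 := hposA c hc
    simp only at hac
    omega
  have hdisj' : Disjoint A' B := by
    rw [Finset.disjoint_left]
    rintro t ht htB
    obtain ⟨j, hj, rfl⟩ := Finset.mem_image.1 ht
    exact hdisj j hj htB
  have hsub : A' ∪ B ⊆ Finset.range (2*m) := by
    apply Finset.union_subset _ hB
    intro t ht
    obtain ⟨j, hj, rfl⟩ := Finset.mem_image.1 ht
    have := Finset.mem_range.1 (hA hj)
    exact Finset.mem_range.2 (by omega)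
  have hcard : (Finset.range (2*m)).card ≤ (A' ∪ B).card := by
    rw [Finset.card_union_of_disjoint hdisj', hcardA', Finset.card_range]
    omega
  have heq : A' ∪ B = Finset.range (2*m) := Finset.eq_of_subset_of_card_le hsub hcard
  intro t ht
  have : t ∈ A' ∪ B := heq ▸ Finset.mem_range.2 ht
  rcases Finset.mem_union.1 this with h | h
  · obtain ⟨j, hj, hjt⟩ := Finset.mem_image.1 h
    have := hposA j hj
    right
    have : j = t + 1 := by omega
    rwa [← this]
  · left; exact h

lemma ncard_le_card_of_subset_image {V : Type*} [Fintype V] (f : ℕ → V) (S : Set V)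
    (A : Finset ℕ) (hsub : S ⊆ f '' ↑A) : S.ncard ≤ A.card := by
  calc S.ncard ≤ (f '' (↑A : Set ℕ)).ncard := Set.ncard_le_ncard hsub (Set.toFinite _)
    _ ≤ (↑A : Set ℕ).ncard := Set.ncard_image_le (Set.toFinite _)
    _ = A.card := Set.ncard_coe_finset A

lemma option_some_or {A : Type*} (a : A) (o : Option A) : (some a).or o = some a := rfl
lemma no_ham_list {V : Type*} [Fintype V] {m : ℕ} {D : Dgr V} {b : ZMod (2*m) → V} {x : V}
    (hnocyc : ¬ D.CycleThrough {u | D.TVertex m u}) (hcard : Fintype.card V = 2*m+1)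
    (hm : 1 ≤ m) (hx : x ∉ Set.range b) (hbinj : Function.Injective b)
    (J : List ℕ) (hJlen : J.length = 2*m) (hJnd : J.Nodup) (hJlt : ∀ j ∈ J, j < 2*m)
    (hchain : List.Chain' D.Arc (J.map (bnn b)))
    (hhead : ∀ w ∈ (J.map (bnn b)).head?, D.Arc x w)
    (hlast : ∀ u ∈ (J.map (bnn b)).getLast?, D.Arc u x) : False := by
  classical
  set M := J.map (bnn b) with hM
  have hMne : M ≠ [] := by
    intro h
    have := congrArg List.length h
    rw [hM, List.length_map, hJlen] at this
    simp at this; omega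
  set L := x :: M with hL
  have hLlen : L.length = 2*m+1 := by
    rw [hL, List.length_cons, hM, List.length_map, hJlen]
  have hMnd : M.Nodup := by
    refine List.Nodup.map_on ?_ hJnd
    intro i hi j hj hij
    exact bnn_inj hbinj (hJlt i hi) (hJlt j hj) hij
  have hxM : x ∉ M := by
    intro hmem
    obtain ⟨j, _, rfl⟩ := List.mem_map.1 hmem
    exact hx ⟨_, rfl⟩
  have hLnd : L.Nodup := List.nodup_cons.2 ⟨hxM, hMnd⟩
  have hLchain : L.Chain' D.Arc := List.isChain_cons.2 ⟨hhead, hchain⟩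
  have hLlast : ∀ u ∈ L.getLast?, ∀ w ∈ L.head?, D.Arc u w := by
    intro u hu w hw
    rw [hL, List.head?_cons, Option.mem_some_iff] at hw
    subst hw
    apply hlast
    rw [hL, show x :: M = [x] ++ M from rfl, List.getLast?_append,
      List.getLast?_eq_getLast hMne, option_some_or] at hu
    rw [List.getLast?_eq_getLast hMne]
    exact hu
  have hall : ∀ v : V, v ∈ L := by
    have h1 : L.toFinset.card = Fintype.card V := by
      rw [List.toFinset_card_of_nodup hLnd, hLlen, hcard]
    have h2 := Finset.eq_univ_of_card _ h1
    intro v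
    rw [← List.mem_toFinset, h2]
    exact Finset.mem_univ v
  exact hnocyc (cycleThrough_of_list_s6 D _ L (by omega) hLnd hLchain hLlast
    (fun v _ => hall v))

/-- **Claim 3.** Setup: `D` strong of order `n = 2m+1 ≥ 5`, no cycle through all its
`T`-vertices, `C = x_1 ⋯ x_{n-1} x_1` a cycle of length `n-1` (here `b i = x_i`, so
`y = x_{n-1} = b 0` and `p = n-2 = 2m-1`), `x` the vertex off `C`, with `x` and `y`
nonadjacent. If `x_{p-1} x ∈ D` and `y x_p ∈ D`, and for some `k ∈ [2, p-2]` the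
vertices `x_k` and `y` are not adjacent, then `x_k` and `x_p` are also not adjacent. -/
theorem statement6 {V : Type*} [Fintype V] (m : ℕ) (D : Dgr V)
    (hcard : Fintype.card V = 2 * m + 1) (hn : 5 ≤ 2 * m + 1)
    (hstrong : D.Strong)
    (hnocyc : ¬ D.CycleThrough {u | D.TVertex m u})
    (b : ZMod (2 * m) → V) (hb : D.IsCycle b)
    (x : V) (hx : x ∉ Set.range b)
    (hxy : ¬ D.Adj x (b 0))
    (h1 : D.Arc (b ((2 * m - 2 : ℕ) : ZMod (2 * m))) x)
    (h2 : D.Arc (b 0) (b ((2 * m - 1 : ℕ) : ZMod (2 * m))))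
    (k : ℕ) (hk1 : 2 ≤ k) (hk2 : k ≤ 2 * m - 3)
    (hkadj : ¬ D.Adj (b (k : ZMod (2 * m))) (b 0)) :
    ¬ D.Adj (b (k : ZMod (2 * m))) (b ((2 * m - 1 : ℕ) : ZMod (2 * m))) := by
  classical
  have hm : 3 ≤ m := by omega
  haveI : NeZero (2*m) := ⟨by omega⟩
  obtain ⟨h2m, hbinj, hbarc⟩ := hb
  have harc : ∀ i : ℕ, D.Arc (bnn b i) (bnn b (i+1)) := bnn_arc hbarc
  have hb0 : bnn b 0 = b 0 := by simp [bnn]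
  have harc' : D.Arc (bnn b (2*m-1)) (bnn b 0) := by
    have h := harc (2*m-1)
    rw [show 2*m-1+1 = 2*m by omega] at h
    rwa [show bnn b (2*m) = bnn b 0 by simp [bnn]] at h
  have h1' : D.Arc (bnn b (2*m-2)) x := h1
  have h2' : D.Arc (b 0) (bnn b (2*m-1)) := h2
  -- every vertex is x or on the cycle
  have hcover : ∀ v : V, v = x ∨ ∃ ι : ZMod (2*m), b ι = v := by
    by_contra hc
    push_neg at hc
    obtain ⟨v, hvx, hvb⟩ := hc
    have hxim : x ∉ Finset.univ.image b := by
      intro h; obtain ⟨ι, _, hι⟩ := Finset.mem_image.1 h; exact hx ⟨ι, hι⟩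
    have hvim : v ∉ Finset.univ.image b := by
      intro h; obtain ⟨ι, _, hι⟩ := Finset.mem_image.1 h; exact hvb ι hι
    have hxvi : x ∉ insert v (Finset.univ.image b) := by
      rw [Finset.mem_insert]
      rintro (rfl | h)
      · exact hvx rfl
      · exact hxim h
    have hcard2 : (insert x (insert v (Finset.univ.image b))).card = 2*m + 2 := by
      rw [Finset.card_insert_of_notMem hxvi, Finset.card_insert_of_notMem hvim,
        Finset.card_image_of_injective _ hbinj, Finset.card_univ, ZMod.card]
    have hle := Finset.card_le_univ (insert x (insert v (Finset.univ.image b)))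
    rw [hcard2, hcard] at hle
    omega
  have hcover' : ∀ v : V, v = x ∨ ∃ j : ℕ, j < 2*m ∧ bnn b j = v := by
    intro v
    rcases hcover v with h | ⟨ι, hι⟩
    · exact Or.inl h
    · exact Or.inr ⟨ι.val, ZMod.val_lt ι, by
        show b _ = v
        rw [ZMod.natCast_rightInverse ι]; exact hι⟩
  -- x is a T-vertex
  have hxT : D.TVertex m x := by
    by_contra hT
    refine hnocyc ⟨2*m, b, ⟨h2m, hbinj, hbarc⟩, ?_⟩
    intro u hu
    rcases hcover u with rfl | ⟨ι, hι⟩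
    · exact absurd hu hT
    · exact ⟨ι, hι⟩
  -- no insertion of x into C
  have hnoinsx : ∀ i : ℕ, i < 2*m → ¬ (D.Arc (bnn b i) x ∧ D.Arc x (bnn b (i+1))) := by
    rintro i hi ⟨ha1, ha2⟩
    rcases Nat.eq_zero_or_pos i with rfl | hi1
    · exact hxy (Or.inr (by rwa [hb0] at ha1))
    rcases eq_or_lt_of_le (show i + 1 ≤ 2*m by omega) with hE | hi2
    · rw [hE, show bnn b (2*m) = b 0 by simp [bnn]] at ha2
      exact hxy (Or.inl ha2)
    refine no_ham_list hnocyc hcard (by omega) hx hbinj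
      (List.range' (i+1) (2*m-1-i) ++ List.range' 0 (i+1)) ?_ ?_ ?_ ?_ ?_ ?_
    · simp only [List.length_append, List.length_range']; omega
    · rw [List.nodup_append]
      refine ⟨List.nodup_range', List.nodup_range', ?_⟩
      rintro a ha _ hb' rfl
      rw [List.mem_range'_1] at ha hb'
      omega
    · intro j hj
      rcases List.mem_append.1 hj with h | h <;> (rw [List.mem_range'_1] at h; omega)
    · rw [List.map_append, List.Chain', List.isChain_append]
      refine ⟨chain_bnn hbarc _ _, chain_bnn hbarc _ _, ?_⟩
      intro u hu w hw
      rw [last_bnn b _ _ (by omega), Option.mem_some_iff] at hu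
      rw [head_bnn b _ _ (by omega), Option.mem_some_iff] at hw
      subst hu; subst hw
      rw [show i+1+(2*m-1-i)-1 = 2*m-1 by omega]
      exact harc'
    · intro w hw
      rw [List.map_append, List.head?_append, head_bnn b _ _ (by omega),
        option_some_or, Option.mem_some_iff] at hw
      subst hw
      exact ha2
    · intro u hu
      rw [List.map_append, List.getLast?_append, last_bnn b _ _ (by omega),
        option_some_or, Option.mem_some_iff] at hu
      subst hu
      rw [show 0+(i+1)-1 = i by omega]
      exact ha1
  -- counting for x
  have keyx : ∀ t, t < 2*m →
      t ∈ (Finset.range (2*m)).filter (fun j => D.Arc (bnn b j) x) ∨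
      t + 1 ∈ (Finset.range (2*m)).filter (fun j => D.Arc x (bnn b j)) := by
    refine count_core m _ _ (Finset.filter_subset _ _) (Finset.filter_subset _ _) ?_ ?_ ?_ ?_ ?_
    · rw [Finset.mem_filter]
      rintro ⟨-, h⟩
      exact hxy (Or.inl (hb0 ▸ h))
    · rw [Finset.mem_filter]
      rintro ⟨-, h⟩
      exact hxy (Or.inr (hb0 ▸ h))
    · intro j hj hj'
      rw [Finset.mem_filter, Finset.mem_range] at hj hj'
      have hj1 : 1 ≤ j := by
        rcases Nat.eq_zero_or_pos j with rfl | h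
        · exact absurd (hb0 ▸ hj.2) (fun h' => hxy (Or.inl h'))
        · exact h
      refine hnoinsx (j-1) (by omega) ⟨hj'.2, ?_⟩
      rw [show j-1+1 = j by omega]
      exact hj.2
    · refine le_trans hxT.1 (ncard_le_card_of_subset_image (bnn b) _ _ ?_)
      intro v hv
      rcases hcover' v with rfl | ⟨j, hj, rfl⟩
      · exact absurd hv (D.loopless _)
      · exact ⟨j, by
          rw [Finset.mem_coe, Finset.mem_filter, Finset.mem_range]
          exact ⟨hj, hv⟩, rfl⟩
    · refine le_trans hxT.2 (ncard_le_card_of_subset_image (bnn b) _ _ ?_)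
      intro v hv
      rcases hcover' v with rfl | ⟨j, hj, rfl⟩
      · exact absurd hv (D.loopless _)
      · exact ⟨j, by
          rw [Finset.mem_coe, Finset.mem_filter, Finset.mem_range]
          exact ⟨hj, hv⟩, rfl⟩
  have hx1 : D.Arc x (bnn b 1) := by
    rcases keyx 0 (by omega) with h | h
    · rw [Finset.mem_filter] at h
      exact absurd (hb0 ▸ h.2) (fun h' => hxy (Or.inr h'))
    · exact (Finset.mem_filter.1 h).2
  have hxp : D.Arc (bnn b (2*m-1)) x := by
    rcases keyx (2*m-1) (by omega) with h | h
    · exact (Finset.mem_filter.1 h).2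
    · have hh := Finset.mem_range.1 (Finset.mem_filter.1 h).1
      omega
  -- y = b 0 is a T-vertex (via the 2m-cycle x x₁ ⋯ x_{2m-1})
  have hyT : D.TVertex m (b 0) := by
    by_contra hT
    refine hnocyc (cycleThrough_of_list_s6 D _ (x :: (List.range' 1 (2*m-1)).map (bnn b))
      ?_ ?_ ?_ ?_ ?_)
    · simp only [List.length_cons, List.length_map, List.length_range']; omega
    · refine List.nodup_cons.2 ⟨?_, ?_⟩
      · intro hmem
        obtain ⟨j, _, rfl⟩ := List.mem_map.1 hmem
        exact hx ⟨_, rfl⟩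
      · refine List.Nodup.map_on ?_ (List.nodup_range')
        intro i hi j hj hij
        rw [List.mem_range'_1] at hi hj
        exact bnn_inj hbinj (by omega) (by omega) hij
    · refine List.isChain_cons.2 ⟨?_, chain_bnn hbarc _ _⟩
      intro w hw
      rw [head_bnn b _ _ (by omega), Option.mem_some_iff] at hw
      subst hw
      exact hx1
    · intro u hu w hw
      rw [List.head?_cons, Option.mem_some_iff] at hw
      subst hw
      rw [show x :: (List.range' 1 (2*m-1)).map (bnn b)
          = [x] ++ (List.range' 1 (2*m-1)).map (bnn b) from rfl,
        List.getLast?_append, last_bnn b _ _ (by omega), option_some_or,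
        Option.mem_some_iff] at hu
      subst hu
      rw [show 1+(2*m-1)-1 = 2*m-1 by omega]
      exact hxp
    · intro v hv
      rcases hcover' v with rfl | ⟨j, hj, rfl⟩
      · exact List.mem_cons_self
      · rcases Nat.eq_zero_or_pos j with rfl | hj1
        · exact absurd (hb0 ▸ hv) hT
        · exact List.mem_cons.2 (Or.inr (List.mem_map.2
            ⟨j, List.mem_range'_1.2 ⟨hj1, by omega⟩, rfl⟩))
  -- no insertion of y into the cycle x x₁ ⋯ x_{2m-1}
  have hnoinsy : ∀ i : ℕ, 1 ≤ i → i ≤ 2*m-2 →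
      ¬ (D.Arc (bnn b i) (b 0) ∧ D.Arc (b 0) (bnn b (i+1))) := by
    rintro i hi1 hi2 ⟨ha1, ha2⟩
    refine no_ham_list hnocyc hcard (by omega) hx hbinj
      (List.range' 1 i ++ ([0] ++ List.range' (i+1) (2*m-1-i))) ?_ ?_ ?_ ?_ ?_ ?_
    · simp only [List.length_append, List.length_range', List.length_cons,
        List.length_nil]; omega
    · rw [List.nodup_append, List.nodup_append]
      refine ⟨List.nodup_range', ⟨List.nodup_singleton _, List.nodup_range', ?_⟩, ?_⟩
      · rintro a ha _ ha' rfl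
        rw [List.mem_singleton] at ha
        rw [List.mem_range'_1] at ha'
        omega
      · rintro a ha _ ha' rfl
        rw [List.mem_range'_1] at ha
        rcases List.mem_append.1 ha' with h | h
        · rw [List.mem_singleton] at h; omega
        · rw [List.mem_range'_1] at h; omega
    · intro j hj
      rcases List.mem_append.1 hj with h | h
      · rw [List.mem_range'_1] at h; omega
      · rcases List.mem_append.1 h with h' | h'
        · rw [List.mem_singleton] at h'; omega
        · rw [List.mem_range'_1] at h'; omega
    · rw [List.map_append, List.map_append, List.Chain', List.isChain_append]
      refine ⟨chain_bnn hbarc _ _, ?_, ?_⟩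
      · rw [List.isChain_append]
        refine ⟨List.isChain_singleton _, chain_bnn hbarc _ _, ?_⟩
        intro u hu w hw
        rw [List.map_singleton, List.getLast?_singleton, Option.mem_some_iff] at hu
        rw [head_bnn b _ _ (by omega), Option.mem_some_iff] at hw
        subst hu; subst hw
        rw [hb0]
        exact ha2
      · intro u hu w hw
        rw [last_bnn b _ _ (by omega), Option.mem_some_iff] at hu
        rw [List.head?_append, List.map_singleton, List.head?_cons, option_some_or,
          Option.mem_some_iff] at hw
        subst hu; subst hw
        rw [show 1+i-1 = i by omega, hb0]
        exact ha1
    · intro w hw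
      rw [List.map_append, List.head?_append, head_bnn b _ _ (by omega),
        option_some_or, Option.mem_some_iff] at hw
      subst hw
      exact hx1
    · intro u hu
      rw [List.map_append, List.getLast?_append, List.map_append, List.getLast?_append,
        last_bnn b _ _ (by omega), option_some_or, option_some_or,
        Option.mem_some_iff] at hu
      subst hu
      rw [show i+1+(2*m-1-i)-1 = 2*m-1 by omega]
      exact hxp
  -- counting for y
  have keyy : ∀ t, t < 2*m →
      t ∈ (Finset.range (2*m)).filter (fun j => D.Arc (bnn b j) (b 0)) ∨
      t + 1 ∈ (Finset.range (2*m)).filter (fun j => D.Arc (b 0) (bnn b j)) := by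
    refine count_core m _ _ (Finset.filter_subset _ _) (Finset.filter_subset _ _) ?_ ?_ ?_ ?_ ?_
    · rw [Finset.mem_filter]
      rintro ⟨-, h⟩
      exact D.loopless (b 0) (hb0 ▸ h)
    · rw [Finset.mem_filter]
      rintro ⟨-, h⟩
      exact D.loopless (b 0) (hb0 ▸ h)
    · intro j hj hj'
      rw [Finset.mem_filter, Finset.mem_range] at hj hj'
      have hj1 : 1 ≤ j := by
        rcases Nat.eq_zero_or_pos j with rfl | h
        · exact absurd (hb0 ▸ hj.2) (D.loopless (b 0))
        · exact h
      rcases Nat.eq_zero_or_pos (j-1) with hz | hpos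
      · rw [hz] at hj'
        exact D.loopless (b 0) (hb0 ▸ hj'.2)
      refine hnoinsy (j-1) hpos (by omega) ⟨hj'.2, ?_⟩
      rw [show j-1+1 = j by omega]
      exact hj.2
    · refine le_trans hyT.1 (ncard_le_card_of_subset_image (bnn b) _ _ ?_)
      intro v hv
      rcases hcover' v with rfl | ⟨j, hj, rfl⟩
      · exact absurd hv (fun h => hxy (Or.inr h))
      · exact ⟨j, by
          rw [Finset.mem_coe, Finset.mem_filter, Finset.mem_range]
          exact ⟨hj, hv⟩, rfl⟩
    · refine le_trans hyT.2 (ncard_le_card_of_subset_image (bnn b) _ _ ?_)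
      intro v hv
      rcases hcover' v with rfl | ⟨j, hj, rfl⟩
      · exact absurd hv (fun h => hxy (Or.inl h))
      · exact ⟨j, by
          rw [Finset.mem_coe, Finset.mem_filter, Finset.mem_range]
          exact ⟨hj, hv⟩, rfl⟩
  have hyk : D.Arc (b 0) (bnn b (k+1)) := by
    rcases keyy k (by omega) with h | h
    · exact absurd (Finset.mem_filter.1 h).2 (fun h' => hkadj (Or.inl h'))
    · exact (Finset.mem_filter.1 h).2
  have hky : D.Arc (bnn b (k-1)) (b 0) := by
    rcases keyy (k-1) (by omega) with h | h
    · exact (Finset.mem_filter.1 h).2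
    · rw [show k-1+1 = k by omega] at h
      exact absurd (Finset.mem_filter.1 h).2 (fun h' => hkadj (Or.inr h'))
  -- final contradiction
  rintro (hB | hA)
  · -- x_k → x_p : Hamiltonian cycle x x₁…x_k x_p y x_{k+1}…x_{2m-2} x
    refine no_ham_list hnocyc hcard (by omega) hx hbinj
      (List.range' 1 k ++ ([2*m-1, 0] ++ List.range' (k+1) (2*m-2-k))) ?_ ?_ ?_ ?_ ?_ ?_
    · simp only [List.length_append, List.length_range', List.length_cons,
        List.length_nil]; omega
    · rw [List.nodup_append, List.nodup_append]
      refine ⟨List.nodup_range', ⟨?_, List.nodup_range', ?_⟩, ?_⟩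
      · simp; omega
      · rintro a ha _ ha' rfl
        rw [List.mem_range'_1] at ha'
        rcases List.mem_cons.1 ha with h | h
        · omega
        · rw [List.mem_singleton] at h; omega
      · rintro a ha _ ha' rfl
        rw [List.mem_range'_1] at ha
        rcases List.mem_append.1 ha' with h | h
        · rcases List.mem_cons.1 h with h' | h'
          · omega
          · rw [List.mem_singleton] at h'; omega
        · rw [List.mem_range'_1] at h; omega
    · intro j hj
      rcases List.mem_append.1 hj with h | h
      · rw [List.mem_range'_1] at h; omega
      · rcases List.mem_append.1 h with h' | h'
        · rcases List.mem_cons.1 h' with h'' | h''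
          · omega
          · rw [List.mem_singleton] at h''; omega
        · rw [List.mem_range'_1] at h'; omega
    · rw [List.map_append, List.Chain', List.isChain_append]
      refine ⟨chain_bnn hbarc _ _, ?_, ?_⟩
      · rw [List.map_append]
        rw [List.isChain_append]
        refine ⟨?_, chain_bnn hbarc _ _, ?_⟩
        · rw [show List.map (bnn b) [2*m-1, 0] = [bnn b (2*m-1), bnn b 0] from rfl]
          exact List.isChain_pair.2 harc'
        · intro u hu w hw
          rw [show List.map (bnn b) [2*m-1, 0] = [bnn b (2*m-1), bnn b 0] from rfl,
            List.getLast?_cons_cons, List.getLast?_singleton, Option.mem_some_iff] at hu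
          rw [head_bnn b _ _ (by omega), Option.mem_some_iff] at hw
          subst hu; subst hw
          rw [hb0]
          exact hyk
      · intro u hu w hw
        rw [last_bnn b _ _ (by omega), Option.mem_some_iff] at hu
        rw [List.map_append, List.head?_append,
          show List.map (bnn b) [2*m-1, 0] = [bnn b (2*m-1), bnn b 0] from rfl,
          List.head?_cons, option_some_or, Option.mem_some_iff] at hw
        subst hu; subst hw
        rw [show 1+k-1 = k by omega]
        exact hB
    · intro w hw
      rw [List.map_append, List.head?_append, head_bnn b _ _ (by omega),
        option_some_or, Option.mem_some_iff] at hw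
      subst hw
      exact hx1
    · intro u hu
      rw [List.map_append, List.getLast?_append, List.map_append, List.getLast?_append,
        last_bnn b _ _ (by omega), option_some_or, option_some_or,
        Option.mem_some_iff] at hu
      subst hu
      rw [show k+1+(2*m-2-k)-1 = 2*m-2 by omega]
      exact h1'
  · -- x_p → x_k : Hamiltonian cycle x x₁…x_{k-1} y x_p x_k…x_{2m-2} x
    refine no_ham_list hnocyc hcard (by omega) hx hbinj
      (List.range' 1 (k-1) ++ ([0, 2*m-1] ++ List.range' k (2*m-1-k))) ?_ ?_ ?_ ?_ ?_ ?_
    · simp only [List.length_append, List.length_range', List.length_cons,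
        List.length_nil]; omega
    · rw [List.nodup_append, List.nodup_append]
      refine ⟨List.nodup_range', ⟨?_, List.nodup_range', ?_⟩, ?_⟩
      · simp; omega
      · rintro a ha _ ha' rfl
        rw [List.mem_range'_1] at ha'
        rcases List.mem_cons.1 ha with h | h
        · omega
        · rw [List.mem_singleton] at h; omega
      · rintro a ha _ ha' rfl
        rw [List.mem_range'_1] at ha
        rcases List.mem_append.1 ha' with h | h
        · rcases List.mem_cons.1 h with h' | h'
          · omega
          · rw [List.mem_singleton] at h'; omega
        · rw [List.mem_range'_1] at h; omega
    · intro j hj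
      rcases List.mem_append.1 hj with h | h
      · rw [List.mem_range'_1] at h; omega
      · rcases List.mem_append.1 h with h' | h'
        · rcases List.mem_cons.1 h' with h'' | h''
          · omega
          · rw [List.mem_singleton] at h''; omega
        · rw [List.mem_range'_1] at h'; omega
    · rw [List.map_append, List.Chain', List.isChain_append]
      refine ⟨chain_bnn hbarc _ _, ?_, ?_⟩
      · rw [List.map_append]
        rw [List.isChain_append]
        refine ⟨?_, chain_bnn hbarc _ _, ?_⟩
        · rw [show List.map (bnn b) [0, 2*m-1] = [bnn b 0, bnn b (2*m-1)] from rfl]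
          refine List.isChain_pair.2 ?_
          rw [hb0]
          exact h2'
        · intro u hu w hw
          rw [show List.map (bnn b) [0, 2*m-1] = [bnn b 0, bnn b (2*m-1)] from rfl,
            List.getLast?_cons_cons, List.getLast?_singleton, Option.mem_some_iff] at hu
          rw [head_bnn b _ _ (by omega), Option.mem_some_iff] at hw
          subst hu; subst hw
          exact hA
      · intro u hu w hw
        rw [last_bnn b _ _ (by omega), Option.mem_some_iff] at hu
        rw [List.map_append, List.head?_append,
          show List.map (bnn b) [0, 2*m-1] = [bnn b 0, bnn b (2*m-1)] from rfl,
          List.head?_cons, option_some_or, Option.mem_some_iff] at hw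
        subst hu; subst hw
        rw [show 1+(k-1)-1 = k-1 by omega, hb0]
        exact hky
    · intro w hw
      rw [List.map_append, List.head?_append, head_bnn b _ _ (by omega),
        option_some_or, Option.mem_some_iff] at hw
      subst hw
      exact hx1
    · intro u hu
      rw [List.map_append, List.getLast?_append, List.map_append, List.getLast?_append,
        last_bnn b _ _ (by omega), option_some_or, option_some_or,
        Option.mem_some_iff] at hu
      subst hu
      rw [show k+(2*m-1-k)-1 = 2*m-2 by omega]
      exact h1'
end

section
/- Let D be a strong digraph of order n = 2m+1 ≥ 5 that contains no cycle passing through all of its T-vertices, let C = x_1x_2…x_{n−1}x_1 be a cycle of length n−1 in D, let x be the unique vertex of D not on C, and suppose x and x_{n−1} are not adjacent; write y = x_{n−1} and p = n−2. If the arcs x_{p−1}x and y x_p are present in D, then for every i ∈ [2, p−2] the vertex x_i is adjacent to x or to y (i.e., d(x_i, {x,y}) ≥ 1). -/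
section Claim4Helpers

variable {V : Type*}

lemma natCast_inj_lt' {n : ℕ} {a c : ℕ} (ha : a < n) (hc : c < n) (h : (a : ZMod n) = c) :
    a = c := by
  rw [← ZMod.val_cast_of_lt ha, ← ZMod.val_cast_of_lt hc, h]

lemma castval' {n : ℕ} [NeZero n] (s : ZMod n) : ((s.val : ℕ) : ZMod n) = s :=
  ZMod.natCast_rightInverse s

lemma binj_nat' {n : ℕ} {b : ZMod n → V} (hb : Function.Injective b) :
    ∀ s, s < n → ∀ t, t < n → b (s : ZMod n) = b (t : ZMod n) → s = t := by
  intro s hs t ht h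
  exact natCast_inj_lt' hs ht (hb h)

lemma Dgr.isCycle_fn (D : Dgr V) {N : ℕ} (hN : 2 ≤ N) (f : ℕ → V)
    (hinj : ∀ a, a < N → ∀ c, c < N → f a = f c → a = c)
    (harc : ∀ a, a + 1 < N → D.Arc (f a) (f (a + 1)))
    (hlast : D.Arc (f (N - 1)) (f 0)) :
    D.IsCycle (fun k : ZMod N => f k.val) ∧
      ∀ a, a < N → f a ∈ Set.range (fun k : ZMod N => f k.val) := by
  haveI : NeZero N := ⟨by omega⟩
  haveI : Fact (1 < N) := ⟨by omega⟩
  refine ⟨⟨hN, ?_, ?_⟩, ?_⟩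
  · intro k k' h
    exact ZMod.val_injective N (hinj _ (ZMod.val_lt k) _ (ZMod.val_lt k') h)
  · intro k
    have hv : (k + 1).val = (k.val + 1) % N := by
      rw [ZMod.val_add, ZMod.val_one]
    have hk := ZMod.val_lt k
    by_cases hc : k.val + 1 < N
    · have h5 : (k + 1).val = k.val + 1 := by rw [hv, Nat.mod_eq_of_lt hc]
      have := harc k.val hc
      simpa [h5] using this
    · have h1 : k.val = N - 1 := by omega
      have h2 : k.val + 1 = N := by omega
      have h5 : (k + 1).val = 0 := by rw [hv, h2, Nat.mod_self]
      simpa [h5, h1] using hlast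
  · intro a ha
    exact ⟨(a : ZMod N), by simp [ZMod.val_cast_of_lt ha]⟩

lemma pigeon' {α : Type*} [Fintype α] {P Q S : Set α}
    (hPQ : ∀ t, t ∈ P → t ∈ Q → False) (hP : P ⊆ S) (hQ : Q ⊆ S)
    (hcard : S.ncard ≤ P.ncard + Q.ncard) : ∀ s ∈ S, s ∈ P ∨ s ∈ Q := by
  have hdis : Disjoint P Q := Set.disjoint_left.mpr (fun a ha hb => (hPQ a ha hb).elim)
  have hu : (P ∪ Q).ncard = P.ncard + Q.ncard :=
    Set.ncard_union_eq hdis (Set.toFinite _) (Set.toFinite _)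
  have heq : P ∪ Q = S :=
    Set.eq_of_subset_of_ncard_le (Set.union_subset hP hQ) (by omega) (Set.toFinite _)
  intro s hs
  rw [← heq] at hs
  exact hs

lemma Dgr.insert_cycle' (D : Dgr V) {n : ℕ} {b : ZMod n → V} (hb : D.IsCycle b)
    {x : V} (hx : x ∉ Set.range b) {j : ZMod n}
    (ha1 : D.Arc (b j) x) (ha2 : D.Arc x (b (j + 1))) :
    ∃ c : ZMod (n + 1) → V, D.IsCycle c ∧
      ∀ v, (v ∈ Set.range b ∨ v = x) → v ∈ Set.range c := by
  obtain ⟨hn2, hbinj, hbarc⟩ := hb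
  haveI : NeZero n := ⟨by omega⟩
  have hxb : ∀ t : ZMod n, b t ≠ x := fun t h => hx ⟨t, h⟩
  set f : ℕ → V := fun a => if a = n then x else b (j + 1 + (a : ZMod n)) with hf
  have hfb : ∀ a, a ≠ n → f a = b (j + 1 + (a : ZMod n)) := by
    intro a ha; simp only [hf, if_neg ha]
  have hfx : f n = x := by simp only [hf, if_pos rfl]
  have em1 : ((n - 1 : ℕ) : ZMod n) = -1 := by
    rw [Nat.cast_sub (by omega : 1 ≤ n), ZMod.natCast_self]; ring
  have hinj : ∀ a, a < n + 1 → ∀ c, c < n + 1 → f a = f c → a = c := by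
    intro a ha c hc h
    by_cases h1 : a = n <;> by_cases h2 : c = n
    · omega
    · rw [h1, hfx, hfb c h2] at h; exact absurd h.symm (hxb _)
    · rw [h2, hfx, hfb a h1] at h; exact absurd h (hxb _)
    · rw [hfb a h1, hfb c h2] at h
      have h3 : (a : ZMod n) = (c : ZMod n) := by
        have := hbinj h
        exact add_left_cancel this
      exact natCast_inj_lt' (by omega) (by omega) h3
  have harc : ∀ a, a + 1 < n + 1 → D.Arc (f a) (f (a + 1)) := by
    intro a ha
    by_cases h1 : a + 1 = n
    · have h2 : a = n - 1 := by omega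
      rw [hfb a (by omega), h1, hfx, h2, em1]
      have : j + 1 + -1 = j := by ring
      rw [this]; exact ha1
    · rw [hfb a (by omega), hfb (a + 1) h1]
      have e : ((a + 1 : ℕ) : ZMod n) = (a : ZMod n) + 1 := by push_cast; ring
      rw [e, ← add_assoc]
      exact hbarc _
  have hlast : D.Arc (f (n + 1 - 1)) (f 0) := by
    have e0 : n + 1 - 1 = n := by omega
    rw [e0, hfx, hfb 0 (by omega)]
    simpa using ha2
  obtain ⟨hcyc, hrange⟩ := D.isCycle_fn (N := n + 1) (by omega) f hinj harc hlast
  refine ⟨_, hcyc, ?_⟩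
  rintro v (⟨t, rfl⟩ | rfl)
  · have h6 : (t - (j + 1)).val < n := ZMod.val_lt _
    have := hrange (t - (j + 1)).val (by omega)
    rwa [hfb _ (by omega), castval', add_sub_cancel] at this
  · have := hrange n (by omega)
    rwa [hfx] at this

lemma Dgr.replace_cycle' (D : Dgr V) {n : ℕ} {b : ZMod n → V} (hb : D.IsCycle b)
    (hn : 3 ≤ n) {x : V} (hx : x ∉ Set.range b) {j : ZMod n}
    (ha1 : D.Arc (b (j - 1)) x) (ha2 : D.Arc x (b (j + 1))) :
    ∃ c : ZMod n → V, D.IsCycle c ∧ c (-1) = x ∧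
      ∀ k : ZMod n, k ≠ -1 → c k = b (j + 1 + k) := by
  obtain ⟨hn2, hbinj, hbarc⟩ := hb
  haveI : NeZero n := ⟨by omega⟩
  have hxb : ∀ t : ZMod n, b t ≠ x := fun t h => hx ⟨t, h⟩
  set f : ℕ → V := fun a => if a = n - 1 then x else b (j + 1 + (a : ZMod n)) with hf
  have hfb : ∀ a, a ≠ n - 1 → f a = b (j + 1 + (a : ZMod n)) := by
    intro a ha; simp only [hf, if_neg ha]
  have hfx : f (n - 1) = x := by simp only [hf, if_pos rfl]
  have em1 : ((n - 1 : ℕ) : ZMod n) = -1 := by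
    rw [Nat.cast_sub (by omega : 1 ≤ n), ZMod.natCast_self]; ring
  have em2 : ((n - 2 : ℕ) : ZMod n) = -2 := by
    rw [Nat.cast_sub (by omega : 2 ≤ n), ZMod.natCast_self]; push_cast; ring
  have hinj : ∀ a, a < n → ∀ c, c < n → f a = f c → a = c := by
    intro a ha c hc h
    by_cases h1 : a = n - 1 <;> by_cases h2 : c = n - 1
    · omega
    · rw [h1, hfx, hfb c h2] at h; exact absurd h.symm (hxb _)
    · rw [h2, hfx, hfb a h1] at h; exact absurd h (hxb _)
    · rw [hfb a h1, hfb c h2] at h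
      exact natCast_inj_lt' ha hc (add_left_cancel (hbinj h))
  have harc : ∀ a, a + 1 < n → D.Arc (f a) (f (a + 1)) := by
    intro a ha
    by_cases h1 : a + 1 = n - 1
    · have h2 : a = n - 2 := by omega
      rw [hfb a (by omega), h1, hfx, h2, em2]
      have : j + 1 + -2 = j - 1 := by ring
      rw [this]; exact ha1
    · rw [hfb a (by omega), hfb (a + 1) h1]
      have e : ((a + 1 : ℕ) : ZMod n) = (a : ZMod n) + 1 := by push_cast; ring
      rw [e, ← add_assoc]
      exact hbarc _
  have hlast : D.Arc (f (n - 1)) (f 0) := by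
    rw [hfx, hfb 0 (by omega)]
    simpa using ha2
  obtain ⟨hcyc, hrange⟩ := D.isCycle_fn (N := n) (by omega) f hinj harc hlast
  refine ⟨_, hcyc, ?_, ?_⟩
  · have hv : ((-1 : ZMod n)).val = n - 1 := by
      rw [← em1, ZMod.val_cast_of_lt (by omega)]
    simp only [hv, hfx]
  · intro k hk
    have hv : k.val ≠ n - 1 := by
      intro h
      apply hk
      rw [← castval' k, h, em1]
    simp only [hfb _ hv, castval']

end Claim4Helpers

set_option maxHeartbeats 2000000 in
/-- **Claim 4.** Setup as in Claim 3 (`b i = x_i`, `y = x_{n-1} = b 0`, `p = n-2 = 2m-1`).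
If `x_{p-1} x ∈ D` and `y x_p ∈ D`, then every `x_i` with `i ∈ [2, p-2]` is adjacent to
`x` or to `y`, i.e. `d(x_i, {x,y}) ≥ 1`. -/
theorem statement7 {V : Type*} [Fintype V] (m : ℕ) (D : Dgr V)
    (hcard : Fintype.card V = 2 * m + 1) (hn : 5 ≤ 2 * m + 1)
    (hstrong : D.Strong)
    (hnocyc : ¬ D.CycleThrough {u | D.TVertex m u})
    (b : ZMod (2 * m) → V) (hb : D.IsCycle b)
    (x : V) (hx : x ∉ Set.range b)
    (hxy : ¬ D.Adj x (b 0))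
    (h1 : D.Arc (b ((2 * m - 2 : ℕ) : ZMod (2 * m))) x)
    (h2 : D.Arc (b 0) (b ((2 * m - 1 : ℕ) : ZMod (2 * m)))) :
    ∀ i : ℕ, 2 ≤ i → i ≤ 2 * m - 3 →
      D.Adj (b (i : ZMod (2 * m))) x ∨ D.Adj (b (i : ZMod (2 * m))) (b 0) := by
  intro i hi2 hi3
  by_contra hcon
  push_neg at hcon
  obtain ⟨hAx, hAy⟩ := hcon
  have hm : 3 ≤ m := by omega
  haveI : NeZero (2 * m) := ⟨by omega⟩
  haveI : Fact (1 < 2 * m) := ⟨by omega⟩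
  have hbinj : Function.Injective b := hb.2.1
  have hbarc : ∀ k : ZMod (2 * m), D.Arc (b k) (b (k + 1)) := hb.2.2
  have hbarcN : ∀ t : ℕ, D.Arc (b (t : ZMod (2 * m))) (b ((t + 1 : ℕ) : ZMod (2 * m))) := by
    intro t
    have := hbarc (t : ZMod (2 * m))
    have e : ((t + 1 : ℕ) : ZMod (2 * m)) = (t : ZMod (2 * m)) + 1 := by push_cast; ring
    rwa [e]
  have hxmem : ∀ t : ZMod (2 * m), b t ≠ x := fun t h => hx ⟨t, h⟩
  -- cast facts
  have em1 : ((2 * m - 1 : ℕ) : ZMod (2 * m)) = -1 := by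
    rw [Nat.cast_sub (by omega : 1 ≤ 2 * m), ZMod.natCast_self]; ring
  have ei1 : ((i - 1 : ℕ) : ZMod (2 * m)) = (i : ZMod (2 * m)) - 1 := by
    rw [Nat.cast_sub (by omega : 1 ≤ i)]; push_cast; ring
  have hiNe0 : (i : ZMod (2 * m)) ≠ 0 := by
    intro h
    have h' : ((i : ℕ) : ZMod (2 * m)).val = i := ZMod.val_cast_of_lt (by omega)
    rw [h] at h'
    simp at h'
    omega
  have hiNem1 : (i : ZMod (2 * m)) ≠ -1 := by
    rw [← em1]
    intro h
    have h9 : i = 2 * m - 1 := natCast_inj_lt' (n := 2 * m) (by omega) (by omega) h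
    omega
  -- cover: every vertex is on b or equals x
  have hrange_card : (Set.range b).ncard = 2 * m := by
    rw [← Set.image_univ, Set.ncard_image_of_injective _ hbinj, Set.ncard_univ, Nat.card_zmod]
  have hcover : ∀ v : V, v ∈ Set.range b ∨ v = x := by
    intro v
    by_contra hv
    push_neg at hv
    obtain ⟨hv1, hv2⟩ := hv
    have h3 : (insert v (insert x (Set.range b))).ncard = 2 * m + 2 := by
      rw [Set.ncard_insert_of_notMem (by simp [hv1, hv2]) (Set.toFinite _),
          Set.ncard_insert_of_notMem hx (Set.toFinite _), hrange_card]
    have h4 : (insert v (insert x (Set.range b))).ncard ≤ Set.univ.ncard :=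
      Set.ncard_le_ncard (Set.subset_univ _) (Set.toFinite _)
    rw [Set.ncard_univ, Nat.card_eq_fintype_card, hcard] at h4
    omega
  -- degree index sets
  have hIdx_out : ∀ u : V, ¬ D.Arc u x →
      {j : ZMod (2 * m) | D.Arc u (b j)}.ncard = D.outDeg u := by
    intro u hux
    have hset : {v | D.Arc u v} = b '' {j | D.Arc u (b j)} := by
      ext v
      constructor
      · intro hv
        rcases hcover v with ⟨t, rfl⟩ | rfl
        · exact ⟨t, hv, rfl⟩
        · exact absurd hv hux
      · rintro ⟨t, ht, rfl⟩; exact ht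
    rw [Dgr.outDeg, hset, Set.ncard_image_of_injective _ hbinj]
  have hIdx_in : ∀ u : V, ¬ D.Arc x u →
      {j : ZMod (2 * m) | D.Arc (b j) u}.ncard = D.inDeg u := by
    intro u hux
    have hset : {v | D.Arc v u} = b '' {j | D.Arc (b j) u} := by
      ext v
      constructor
      · intro hv
        rcases hcover v with ⟨t, rfl⟩ | rfl
        · exact ⟨t, hv, rfl⟩
        · exact absurd hv hux
      · rintro ⟨t, ht, rfl⟩; exact ht
    rw [Dgr.inDeg, hset, Set.ncard_image_of_injective _ hbinj]
  -- from hnocyc: every cycle misses a T-vertex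
  have hTget : ∀ (k : ℕ) (c : ZMod k → V), D.IsCycle c →
      ∃ u, D.TVertex m u ∧ u ∉ Set.range c := by
    intro k c hc
    by_contra h
    push_neg at h
    exact hnocyc ⟨k, c, hc, fun u hu => h u hu⟩
  -- Step A : x is a T-vertex
  have hTx : D.TVertex m x := by
    obtain ⟨u, hu, hur⟩ := hTget _ b hb
    rcases hcover u with hur' | rfl
    · exact absurd hur' hur
    · exact hu
  -- Step B : no insertion of x into b
  have hnoins : ∀ k : ZMod (2 * m), ¬ (D.Arc (b k) x ∧ D.Arc x (b (k + 1))) := by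
    rintro k ⟨hk1, hk2⟩
    obtain ⟨c, hc, hcr⟩ := D.insert_cycle' hb hx hk1 hk2
    exact hnocyc ⟨2 * m + 1, c, hc, fun u _ => hcr u (hcover u)⟩
  have hIout : m ≤ {j : ZMod (2 * m) | D.Arc x (b j)}.ncard := by
    rw [hIdx_out x (D.loopless x)]; exact hTx.1
  have hJin : m ≤ {j : ZMod (2 * m) | D.Arc (b j) x}.ncard := by
    rw [hIdx_in x (D.loopless x)]; exact hTx.2
  have hQcard : ((fun j => j + 1) '' {j : ZMod (2 * m) | D.Arc (b j) x}).ncard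
      = {j : ZMod (2 * m) | D.Arc (b j) x}.ncard :=
    Set.ncard_image_of_injective _ (add_left_injective 1)
  have hBmain : ∀ s : ZMod (2 * m),
      s ∈ {j : ZMod (2 * m) | D.Arc x (b j)} ∨
      s ∈ (fun j => j + 1) '' {j : ZMod (2 * m) | D.Arc (b j) x} := by
    have hp := pigeon' (P := {j : ZMod (2 * m) | D.Arc x (b j)})
      (Q := (fun j => j + 1) '' {j : ZMod (2 * m) | D.Arc (b j) x}) (S := Set.univ)
      ?_ (Set.subset_univ _) (Set.subset_univ _) ?_
    · exact fun s => hp s (Set.mem_univ s)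
    · rintro t ht ⟨j, hj, hj1⟩
      refine hnoins j ⟨hj, ?_⟩
      have e9 : j + 1 = t := hj1
      rw [e9]
      exact ht
    · rw [Set.ncard_univ, Nat.card_zmod]; omega
  have hA1 : D.Arc x (b 1) := by
    rcases hBmain 1 with h | ⟨j, hj, hj1⟩
    · exact h
    · have hj1' : j + 1 = 1 := hj1
      have h3 : j = 0 := by linear_combination hj1'
      rw [h3] at hj
      exact absurd (Or.inr hj) hxy
  have hA2 : D.Arc (b ((i : ZMod (2 * m)) - 1)) x := by
    rcases hBmain (i : ZMod (2 * m)) with h | ⟨j, hj, hj1⟩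
    · exact absurd (Or.inr h) hAx
    · have hj1' : j + 1 = (i : ZMod (2 * m)) := hj1
      have h3 : j = (i : ZMod (2 * m)) - 1 := by linear_combination hj1'
      rwa [← h3]
  have hA3 : D.Arc x (b ((i : ZMod (2 * m)) + 1)) := by
    rcases hBmain ((i : ZMod (2 * m)) + 1) with h | ⟨j, hj, hj1⟩
    · exact h
    · have hj1' : j + 1 = (i : ZMod (2 * m)) + 1 := hj1
      have h3 : j = (i : ZMod (2 * m)) := by linear_combination hj1'
      rw [h3] at hj
      exact absurd (Or.inl hj) hAx
  have hA4 : D.Arc (b (-1)) x := by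
    rcases hBmain 0 with h | ⟨j, hj, hj1⟩
    · exact absurd (Or.inl h) hxy
    · have hj1' : j + 1 = 0 := hj1
      have h3 : j = -1 := by linear_combination hj1'
      rwa [h3] at hj
  -- Step C : cycle missing only y = b 0
  obtain ⟨c, hc, hcneg, hck⟩ := D.replace_cycle' hb (by omega) hx (j := 0)
    (by rw [zero_sub]; exact hA4) (by rw [zero_add]; exact hA1)
  have hcb : ∀ s : ZMod (2 * m), s ≠ 0 → c (s - 1) = b s := by
    intro s hs
    have h1 : s - 1 ≠ -1 := by
      intro h
      exact hs (by linear_combination h)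
    rw [hck _ h1]
    congr 1
    ring
  have hcx : x ∈ Set.range c := ⟨-1, hcneg⟩
  have hcrange : ∀ v : V, v ≠ b 0 → v ∈ Set.range c := by
    intro v hv
    rcases hcover v with ⟨t, rfl⟩ | rfl
    · exact ⟨t - 1, hcb t (fun h => hv (by rw [h]))⟩
    · exact hcx
  have hy_notin : b 0 ∉ Set.range c := by
    rintro ⟨k, hk⟩
    by_cases hk1 : k = -1
    · rw [hk1, hcneg] at hk
      exact hxmem 0 hk.symm
    · rw [hck k hk1] at hk
      have h5 := hbinj hk
      exact hk1 (by linear_combination h5)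
  have hTy : D.TVertex m (b 0) := by
    obtain ⟨u, hu, hur⟩ := hTget _ c hc
    by_cases h : u = b 0
    · rwa [h] at hu
    · exact absurd (hcrange u h) hur
  -- Step D : no insertion of y into c
  have hnoinsy : ∀ k : ZMod (2 * m), ¬ (D.Arc (c k) (b 0) ∧ D.Arc (b 0) (c (k + 1))) := by
    rintro k ⟨hk1, hk2⟩
    obtain ⟨c', hc', hcr'⟩ := D.insert_cycle' hc hy_notin hk1 hk2
    refine hnocyc ⟨2 * m + 1, c', hc', fun u _ => ?_⟩
    by_cases h : u = b 0
    · exact hcr' u (Or.inr h)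
    · exact hcr' u (Or.inl (hcrange u h))
  have hnoy : ∀ j : ZMod (2 * m), j ≠ 0 → j ≠ -1 →
      ¬ (D.Arc (b j) (b 0) ∧ D.Arc (b 0) (b (j + 1))) := by
    rintro j hj0 hjm ⟨hk1, hk2⟩
    apply hnoinsy (j - 1)
    constructor
    · rw [hcb j hj0]; exact hk1
    · have e : j - 1 + 1 = (j + 1) - 1 := by ring
      rw [e, hcb (j + 1) (fun h => hjm (eq_neg_of_add_eq_zero_left h))]
      exact hk2
  have hIy : m ≤ {j : ZMod (2 * m) | D.Arc (b 0) (b j)}.ncard := by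
    rw [hIdx_out (b 0) (fun h => hxy (Or.inr h))]; exact hTy.1
  have hJy : m ≤ {j : ZMod (2 * m) | D.Arc (b j) (b 0)}.ncard := by
    rw [hIdx_in (b 0) (fun h => hxy (Or.inl h))]; exact hTy.2
  have hScard : ∀ a : ZMod (2 * m), (({a}ᶜ : Set (ZMod (2 * m)))).ncard = 2 * m - 1 := by
    intro a
    rw [Set.compl_eq_univ_diff, Set.ncard_diff (Set.subset_univ _) (Set.toFinite _),
      Set.ncard_univ, Nat.card_zmod, Set.ncard_singleton]
  have hQyge : m - 1 ≤ (({j : ZMod (2 * m) | D.Arc (b j) (b 0)} \ {-1})).ncard := by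
    have h5 : {j : ZMod (2 * m) | D.Arc (b j) (b 0)} ⊆
        insert (-1) ({j : ZMod (2 * m) | D.Arc (b j) (b 0)} \ {-1}) := by
      intro t ht
      by_cases h : t = -1
      · exact Or.inl h
      · exact Or.inr ⟨ht, h⟩
    have h6 := Set.ncard_le_ncard h5 (Set.toFinite _)
    have h7 := Set.ncard_insert_le (-1 : ZMod (2 * m))
      ({j : ZMod (2 * m) | D.Arc (b j) (b 0)} \ {-1})
    omega
  have hDmain : ∀ s : ZMod (2 * m), s ≠ 0 →
      s ∈ {j : ZMod (2 * m) | D.Arc (b 0) (b j)} ∨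
      s ∈ (fun j => j + 1) '' ({j : ZMod (2 * m) | D.Arc (b j) (b 0)} \ {-1}) := by
    have hp := pigeon' (P := {j : ZMod (2 * m) | D.Arc (b 0) (b j)})
      (Q := (fun j => j + 1) '' ({j : ZMod (2 * m) | D.Arc (b j) (b 0)} \ {-1}))
      (S := ({0}ᶜ : Set (ZMod (2 * m)))) ?_ ?_ ?_ ?_
    · exact fun s hs => hp s hs
    · rintro t ht ⟨j, ⟨hj, hjm⟩, hj1⟩
      have hj0 : j ≠ 0 := fun h => D.loopless (b 0) (by rw [h] at hj; exact hj)
      refine hnoy j hj0 hjm ⟨hj, ?_⟩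
      have e9 : j + 1 = t := hj1
      rw [e9]
      exact ht
    · intro t ht h0
      rw [Set.mem_singleton_iff] at h0
      rw [h0] at ht
      exact D.loopless (b 0) ht
    · rintro t ⟨j, ⟨hj, hjm⟩, hj1⟩ h0
      rw [Set.mem_singleton_iff] at h0
      have e9 : j + 1 = t := hj1
      rw [← e9] at h0
      exact (hjm (eq_neg_of_add_eq_zero_left h0)).elim
    · rw [hScard]
      have h8 := Set.ncard_image_of_injective
        ({j : ZMod (2 * m) | D.Arc (b j) (b 0)} \ {-1}) (add_left_injective (1 : ZMod (2 * m)))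
      omega
  have hArcD : D.Arc (b ((i : ZMod (2 * m)) - 1)) (b 0) := by
    rcases hDmain (i : ZMod (2 * m)) hiNe0 with h | ⟨j, ⟨hj, _⟩, hj1⟩
    · exact absurd (Or.inr h) hAy
    · have hj1' : j + 1 = (i : ZMod (2 * m)) := hj1
      have h3 : j = (i : ZMod (2 * m)) - 1 := by linear_combination hj1'
      rwa [← h3]
  -- Step E : cycle missing only b i
  obtain ⟨c2, hc2, hc2neg, hc2k⟩ := D.replace_cycle' hb (by omega) hx (j := (i : ZMod (2 * m)))
    hA2 hA3
  have hc2b : ∀ s : ZMod (2 * m), s ≠ (i : ZMod (2 * m)) →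
      c2 (s - (i : ZMod (2 * m)) - 1) = b s := by
    intro s hs
    have h1 : s - (i : ZMod (2 * m)) - 1 ≠ -1 := by
      intro h
      exact hs (by linear_combination h)
    rw [hc2k _ h1]
    congr 1
    ring
  have hc2x : x ∈ Set.range c2 := ⟨-1, hc2neg⟩
  have hc2range : ∀ v : V, v ≠ b (i : ZMod (2 * m)) → v ∈ Set.range c2 := by
    intro v hv
    rcases hcover v with ⟨t, rfl⟩ | rfl
    · exact ⟨t - (i : ZMod (2 * m)) - 1, hc2b t (fun h => hv (by rw [h]))⟩
    · exact hc2x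
  have hxi_notin : b (i : ZMod (2 * m)) ∉ Set.range c2 := by
    rintro ⟨k, hk⟩
    by_cases hk1 : k = -1
    · rw [hk1, hc2neg] at hk
      exact hxmem _ hk.symm
    · rw [hc2k k hk1] at hk
      have h5 := hbinj hk
      exact hk1 (by linear_combination h5)
  have hTxi : D.TVertex m (b (i : ZMod (2 * m))) := by
    obtain ⟨u, hu, hur⟩ := hTget _ c2 hc2
    by_cases h : u = b (i : ZMod (2 * m))
    · rwa [h] at hu
    · exact absurd (hc2range u h) hur
  -- Step F : no insertion of b i into c2
  have hnoinsxi : ∀ k : ZMod (2 * m),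
      ¬ (D.Arc (c2 k) (b (i : ZMod (2 * m))) ∧ D.Arc (b (i : ZMod (2 * m))) (c2 (k + 1))) := by
    rintro k ⟨hk1, hk2⟩
    obtain ⟨c', hc', hcr'⟩ := D.insert_cycle' hc2 hxi_notin hk1 hk2
    refine hnocyc ⟨2 * m + 1, c', hc', fun u _ => ?_⟩
    by_cases h : u = b (i : ZMod (2 * m))
    · exact hcr' u (Or.inr h)
    · exact hcr' u (Or.inl (hc2range u h))
  have hnoxi : ∀ j : ZMod (2 * m), j ≠ (i : ZMod (2 * m)) → j ≠ (i : ZMod (2 * m)) - 1 →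
      ¬ (D.Arc (b j) (b (i : ZMod (2 * m))) ∧ D.Arc (b (i : ZMod (2 * m))) (b (j + 1))) := by
    rintro j hji hjim ⟨hk1, hk2⟩
    apply hnoinsxi (j - (i : ZMod (2 * m)) - 1)
    constructor
    · rw [hc2b j hji]; exact hk1
    · have e : j - (i : ZMod (2 * m)) - 1 + 1 = (j + 1) - (i : ZMod (2 * m)) - 1 := by ring
      rw [e, hc2b (j + 1) (fun h => hjim (by linear_combination h))]
      exact hk2
  have hIxi : m ≤ {j : ZMod (2 * m) | D.Arc (b (i : ZMod (2 * m))) (b j)}.ncard := by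
    rw [hIdx_out _ (fun h => hAx (Or.inl h))]; exact hTxi.1
  have hJxi : m ≤ {j : ZMod (2 * m) | D.Arc (b j) (b (i : ZMod (2 * m)))}.ncard := by
    rw [hIdx_in _ (fun h => hAx (Or.inr h))]; exact hTxi.2
  have hQxige : m - 1 ≤
      (({j : ZMod (2 * m) | D.Arc (b j) (b (i : ZMod (2 * m)))} \
        {(i : ZMod (2 * m)) - 1})).ncard := by
    have h5 : {j : ZMod (2 * m) | D.Arc (b j) (b (i : ZMod (2 * m)))} ⊆
        insert ((i : ZMod (2 * m)) - 1)
          ({j : ZMod (2 * m) | D.Arc (b j) (b (i : ZMod (2 * m)))} \ {(i : ZMod (2 * m)) - 1}) := by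
      intro t ht
      by_cases h : t = (i : ZMod (2 * m)) - 1
      · exact Or.inl h
      · exact Or.inr ⟨ht, h⟩
    have h6 := Set.ncard_le_ncard h5 (Set.toFinite _)
    have h7 := Set.ncard_insert_le ((i : ZMod (2 * m)) - 1)
      ({j : ZMod (2 * m) | D.Arc (b j) (b (i : ZMod (2 * m)))} \ {(i : ZMod (2 * m)) - 1})
    omega
  have hFmain : ∀ s : ZMod (2 * m), s ≠ (i : ZMod (2 * m)) →
      s ∈ {j : ZMod (2 * m) | D.Arc (b (i : ZMod (2 * m))) (b j)} ∨
      s ∈ (fun j => j + 1) ''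
        ({j : ZMod (2 * m) | D.Arc (b j) (b (i : ZMod (2 * m)))} \ {(i : ZMod (2 * m)) - 1}) := by
    have hp := pigeon' (P := {j : ZMod (2 * m) | D.Arc (b (i : ZMod (2 * m))) (b j)})
      (Q := (fun j => j + 1) ''
        ({j : ZMod (2 * m) | D.Arc (b j) (b (i : ZMod (2 * m)))} \ {(i : ZMod (2 * m)) - 1}))
      (S := ({(i : ZMod (2 * m))}ᶜ : Set (ZMod (2 * m)))) ?_ ?_ ?_ ?_
    · exact fun s hs => hp s hs
    · rintro t ht ⟨j, ⟨hj, hjm⟩, hj1⟩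
      have hji : j ≠ (i : ZMod (2 * m)) := fun h =>
        D.loopless (b (i : ZMod (2 * m))) (by rw [h] at hj; exact hj)
      refine hnoxi j hji hjm ⟨hj, ?_⟩
      have e9 : j + 1 = t := hj1
      rw [e9]
      exact ht
    · intro t ht h0
      rw [Set.mem_singleton_iff] at h0
      rw [h0] at ht
      exact D.loopless _ ht
    · rintro t ⟨j, ⟨hj, hjm⟩, hj1⟩ h0
      rw [Set.mem_singleton_iff] at h0
      have e9 : j + 1 = t := hj1
      rw [← e9] at h0
      exact (hjm (show j = (i : ZMod (2 * m)) - 1 by linear_combination h0)).elim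
    · rw [hScard]
      have h8 := Set.ncard_image_of_injective
        ({j : ZMod (2 * m) | D.Arc (b j) (b (i : ZMod (2 * m)))} \ {(i : ZMod (2 * m)) - 1})
        (add_left_injective (1 : ZMod (2 * m)))
      omega
  have hArcF : D.Arc (b (-1)) (b (i : ZMod (2 * m))) := by
    rcases hFmain 0 (fun h => hiNe0 h.symm) with h | ⟨j, ⟨hj, _⟩, hj1⟩
    · exact absurd (Or.inl h) hAy
    · have hj1' : j + 1 = 0 := hj1
      have h3 : j = -1 := by linear_combination hj1'
      rwa [h3] at hj
  -- Step G : build a Hamiltonian cycle, contradiction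
  obtain ⟨g, hg⟩ : ∃ g : ℕ → ℕ, ∀ a, g a =
      if a = 0 then 0
      else if a = 1 then 2 * m - 1
      else if a ≤ 2 * m - i then i + a - 2
      else if a = 2 * m - i + 1 then 2 * m
      else a - (2 * m - i + 1) := ⟨_, fun a => rfl⟩
  obtain ⟨f, hf⟩ : ∃ f : ℕ → V, ∀ a, f a =
      if g a = 2 * m then x else b ((g a : ℕ) : ZMod (2 * m)) := ⟨_, fun a => rfl⟩
  have hfeq : ∀ a v : ℕ, g a = v → v ≠ 2 * m → f a = b ((v : ℕ) : ZMod (2 * m)) := by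
    intro a v hv hne'
    rw [hf, hv, if_neg hne']
  have hfx2 : ∀ a, g a = 2 * m → f a = x := by
    intro a hv
    rw [hf, if_pos hv]
  have hginj : ∀ a, a < 2 * m + 1 → ∀ c, c < 2 * m + 1 → g a = g c → a = c := by
    intro a ha c hc h
    rw [hg a, hg c] at h
    split_ifs at h <;> omega
  have hglt : ∀ a, a < 2 * m + 1 → g a ≤ 2 * m ∧ (g a = 2 * m ↔ a = 2 * m - i + 1) := by
    intro a ha
    rw [hg]
    split_ifs <;> omega
  have hfinj : ∀ a, a < 2 * m + 1 → ∀ c, c < 2 * m + 1 → f a = f c → a = c := by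
    intro a ha c hc h
    by_cases h1 : g a = 2 * m <;> by_cases h2 : g c = 2 * m
    · rw [(hglt a ha).2.mp h1, (hglt c hc).2.mp h2]
    · rw [hfx2 a h1, hfeq c (g c) rfl h2] at h
      exact absurd h.symm (hxmem _)
    · rw [hfx2 c h2, hfeq a (g a) rfl h1] at h
      exact absurd h (hxmem _)
    · rw [hfeq a (g a) rfl h1, hfeq c (g c) rfl h2] at h
      have hga := (hglt a ha).1
      have hgc := (hglt c hc).1
      exact hginj a ha c hc (binj_nat' hbinj _ (by omega) _ (by omega) h)
  have harcf : ∀ a, a + 1 < 2 * m + 1 → D.Arc (f a) (f (a + 1)) := by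
    intro a ha
    by_cases c0 : a = 0
    · subst c0
      rw [hfeq 0 0 (by rw [hg]; split_ifs <;> first | omega | exact (‹False›).elim) (by omega), hfeq 1 (2 * m - 1) (by rw [hg]; split_ifs <;> first | omega | exact (‹False›).elim) (by omega)]
      simpa using h2
    · by_cases c1 : a = 1
      · subst c1
        rw [hfeq 1 (2 * m - 1) (by rw [hg]; split_ifs <;> first | omega | exact (‹False›).elim) (by omega),
          hfeq 2 i (by rw [hg]; split_ifs <;> first | omega | exact (‹False›).elim) (by omega)]
        rw [← em1] at hArcF
        exact hArcF
      · by_cases c2 : a + 1 ≤ 2 * m - i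
        · rw [hfeq a (i + a - 2) (by rw [hg]; split_ifs <;> first | omega | exact (‹False›).elim) (by omega),
            hfeq (a + 1) (i + a - 1) (by rw [hg]; split_ifs <;> first | omega | exact (‹False›).elim) (by omega)]
          have e : i + a - 1 = (i + a - 2) + 1 := by omega
          rw [e]
          exact hbarcN _
        · by_cases c3 : a = 2 * m - i
          · rw [hfeq a (2 * m - 2) (by rw [hg]; split_ifs <;> first | omega | exact (‹False›).elim) (by omega),
              hfx2 (a + 1) (by rw [hg]; split_ifs <;> first | omega | exact (‹False›).elim)]
            exact h1
          · by_cases c4 : a = 2 * m - i + 1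
            · rw [hfx2 a (by rw [hg]; split_ifs <;> first | omega | exact (‹False›).elim),
                hfeq (a + 1) 1 (by rw [hg]; split_ifs <;> first | omega | exact (‹False›).elim) (by omega)]
              simpa using hA1
            · rw [hfeq a (a - (2 * m - i + 1)) (by rw [hg]; split_ifs <;> first | omega | exact (‹False›).elim)
                (by omega),
                hfeq (a + 1) (a - (2 * m - i + 1) + 1) (by rw [hg]; split_ifs <;> first | omega | exact (‹False›).elim)
                (by omega)]
              exact hbarcN _
  have hlastf : D.Arc (f (2 * m + 1 - 1)) (f 0) := by
    have e0 : 2 * m + 1 - 1 = 2 * m := by omega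
    rw [e0, hfeq (2 * m) (i - 1) (by rw [hg]; split_ifs <;> first | omega | exact (‹False›).elim) (by omega),
      hfeq 0 0 (by rw [hg]; split_ifs <;> first | omega | exact (‹False›).elim) (by omega), ei1]
    simpa using hArcD
  obtain ⟨hcyc, hrangef⟩ := D.isCycle_fn (N := 2 * m + 1) (by omega) f hfinj harcf hlastf
  apply hnocyc
  refine ⟨2 * m + 1, _, hcyc, fun u _ => ?_⟩
  have hcov : ∀ s : ℕ, s < 2 * m → ∃ a, a < 2 * m + 1 ∧ g a = s := by
    intro s hs
    by_cases h0 : s = 0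
    · exact ⟨0, by omega, by rw [hg]; split_ifs <;> first | omega | exact (‹False›).elim⟩
    · by_cases h1 : s = 2 * m - 1
      · exact ⟨1, by omega, by rw [hg]; split_ifs <;> first | omega | exact (‹False›).elim⟩
      · by_cases h2' : i ≤ s
        · exact ⟨s - i + 2, by omega, by rw [hg]; split_ifs <;> first | omega | exact (‹False›).elim⟩
        · exact ⟨s + (2 * m - i + 1), by omega, by rw [hg]; split_ifs <;> first | omega | exact (‹False›).elim⟩
  rcases hcover u with ⟨t, rfl⟩ | rfl
  · obtain ⟨a, ha, hga⟩ := hcov t.val (ZMod.val_lt t)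
    have := hrangef a ha
    rwa [hfeq a t.val hga (by have := ZMod.val_lt t; omega), castval'] at this
  · have := hrangef (2 * m - i + 1) (by omega)
    rwa [hfx2 _ ((hglt (2 * m - i + 1) (by omega)).2.mpr rfl)] at this
end

section
/- Let D be a strong digraph of order n = 2m+1 ≥ 5 that contains no cycle passing through all of its T-vertices, let C = x_1x_2…x_{n−1}x_1 be a cycle of length n−1 in D, let x be the unique vertex of D not on C, and suppose x and x_{n−1} are not adjacent; write y = x_{n−1} and p = n−2. If for some k ∈ [2, p−1] the vertex x_k is adjacent to neither x nor y, then the arcs x_p x_k and x_k x_1 are present in D, and moreover N⁺(x) = N⁺(y) and N⁻(x) = N⁻(y). -/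
namespace Rem1

lemma nr (s n : ℕ) : (List.range' s n).Nodup := List.nodup_range'

lemma head?_ra {s n : ℕ} (h : 0 < n) (X : List ℕ) :
    (List.range' s n ++ X).head? = some s := by
  cases n with
  | zero => omega
  | succ n => rw [List.range'_succ]; rfl

lemma chain'_blk {R : ℕ → ℕ → Prop} (s n : ℕ) (hn : 0 < n)
    (hseg : ∀ t, s ≤ t → t + 1 < s + n → R t (t + 1))
    (c : ℕ) (rest : List ℕ) (h1 : R (s + n - 1) c)
    (h2 : ∀ d ∈ rest.head?, R c d) (h3 : rest.Chain' R) :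
    List.Chain' R (List.range' s n ++ (c :: rest)) := by
  induction n generalizing s with
  | zero => omega
  | succ n ih =>
    rw [List.range'_succ, List.cons_append]
    rcases Nat.eq_zero_or_pos n with h0 | h0
    · subst h0
      simp only [List.range'_zero, List.nil_append]
      refine List.isChain_cons_cons.mpr ⟨?_, List.isChain_cons.mpr ⟨h2, h3⟩⟩
      simpa using h1
    · refine List.isChain_cons.mpr ⟨?_, ?_⟩
      · rw [head?_ra h0]
        rintro d ⟨rfl⟩
        exact hseg s (le_refl s) (by omega)
      · exact ih (s+1) h0 (fun t ht ht2 => hseg t (by omega) (by omega))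
          (by rw [show s + 1 + n - 1 = s + (n+1) - 1 from by omega]; exact h1)

lemma cyc_core {V : Type*} {m : ℕ} {D : Dgr V}
    (hnocyc : ¬ D.CycleThrough {u | D.TVertex m u})
    (f : ℕ → V) (a : ℕ) (l : List ℕ)
    (hhead : l.head? = some a)
    (h2 : 2 ≤ l.length)
    (hnd : (l.map f).Nodup)
    (hch : List.Chain' (fun s t => D.Arc (f s) (f t)) (l ++ [a]))
    (hcov : ∀ u, D.TVertex m u → u ∈ l.map f) : False := by
  apply hnocyc
  haveI : NeZero l.length := ⟨by omega⟩
  have hlm : (l.map f).length = l.length := List.length_map _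
  have ha0 : l[0]'(by omega) = a := by
    have := List.head?_eq_getElem? (l := l)
    rw [hhead] at this
    have h0 : l[0]? = some (l[0]'(by omega)) := List.getElem?_eq_getElem (by omega)
    rw [h0] at this
    exact (Option.some_injective _ this.symm)
  refine ⟨l.length, fun z => (l.map f).get ⟨z.val, by rw [hlm]; exact ZMod.val_lt z⟩,
    ⟨h2, ?_, ?_⟩, ?_⟩
  · intro z1 z2 h
    have h' := List.nodup_iff_injective_get.mp hnd h
    have : z1.val = z2.val := by simpa using congrArg Fin.val h'
    exact ZMod.val_injective _ this
  · intro z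
    have hz : z.val < l.length := ZMod.val_lt z
    have hzz : ((z.val : ℕ) : ZMod l.length) = z := ZMod.natCast_rightInverse z
    have hch' := List.isChain_iff_getElem.mp hch
    have hlen' : (l ++ [a]).length = l.length + 1 := by simp
    simp only [List.get_eq_getElem, List.getElem_map]
    by_cases hlast : z.val + 1 = l.length
    · have hv1 : (z + 1).val = 0 := by
        have h : ((z.val + 1 : ℕ) : ZMod l.length) = z + 1 := by
          rw [Nat.cast_add, Nat.cast_one, hzz]
        rw [← h, hlast, ZMod.natCast_self, ZMod.val_zero]
      have hkey := hch' z.val (by simp; omega)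
      rw [List.getElem_append_left hz, List.getElem_concat_length hlast] at hkey
      simp only [hv1, ha0]
      exact hkey
    · have hv1 : (z + 1).val = z.val + 1 := by
        have h := ZMod.val_cast_of_lt (show z.val + 1 < l.length by omega)
        rw [Nat.cast_add, Nat.cast_one, hzz] at h
        exact h
      have hkey := hch' z.val (by simp; omega)
      rw [List.getElem_append_left hz, List.getElem_append_left (by omega : z.val + 1 < l.length)] at hkey
      simp only [hv1]
      exact hkey
  · intro u hu
    rcases List.mem_iff_get.mp (hcov u hu) with ⟨idx, hidx⟩
    refine ⟨((idx.val : ℕ) : ZMod l.length), ?_⟩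
    have hv : ((idx.val : ℕ) : ZMod l.length).val = idx.val :=
      ZMod.val_cast_of_lt (by rw [← hlm]; exact idx.isLt)
    simp only [List.get_eq_getElem] at hidx ⊢
    simp only [hv]
    exact hidx

lemma ham {V : Type*} {m : ℕ} {D : Dgr V} (hm : 2 ≤ m)
    (hnocyc : ¬ D.CycleThrough {u | D.TVertex m u})
    (f : ℕ → V)
    (hfinj : ∀ i ≤ 2*m, ∀ j ≤ 2*m, f i = f j → i = j)
    (hfsurj : ∀ v, ∃ i, i ≤ 2*m ∧ f i = v)
    (a : ℕ) (l : List ℕ)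
    (hhead : l.head? = some a)
    (hlen : l.length = 2*m+1)
    (hle : ∀ i ∈ l, i ≤ 2*m)
    (hnd : l.Nodup)
    (hch : List.Chain' (fun s t => D.Arc (f s) (f t)) (l ++ [a])) : False := by
  classical
  have hmap : (l.map f).Nodup :=
    hnd.map_on (fun i hi j hj h => hfinj i (hle i hi) j (hle j hj) h)
  apply cyc_core hnocyc f a l hhead (by omega) hmap hch
  intro u _
  obtain ⟨i, hi, rfl⟩ := hfsurj u
  have hsub : l.toFinset ⊆ Finset.range (2*m+1) := by
    intro t ht
    rw [List.mem_toFinset] at ht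
    exact Finset.mem_range.mpr (by have := hle t ht; omega)
  have hcardeq : l.toFinset = Finset.range (2*m+1) :=
    Finset.eq_of_subset_of_card_le hsub
      (by rw [Finset.card_range, List.toFinset_card_of_nodup hnd, hlen])
  have : i ∈ l := by
    rw [← List.mem_toFinset, hcardeq]
    exact Finset.mem_range.mpr (by omega)
  exact List.mem_map_of_mem this

lemma near {V : Type*} {m : ℕ} {D : Dgr V} (hm : 2 ≤ m)
    (hnocyc : ¬ D.CycleThrough {u | D.TVertex m u})
    (f : ℕ → V)
    (hfinj : ∀ i ≤ 2*m, ∀ j ≤ 2*m, f i = f j → i = j)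
    (hfsurj : ∀ v, ∃ i, i ≤ 2*m ∧ f i = v)
    (a₀ : ℕ) (hnT : ¬ D.TVertex m (f a₀))
    (a : ℕ) (l : List ℕ)
    (hhead : l.head? = some a)
    (hlen : l.length = 2*m)
    (hle : ∀ i ∈ l, i ≤ 2*m)
    (hnd : l.Nodup)
    (hcov : ∀ t, t ≤ 2*m → t ≠ a₀ → t ∈ l)
    (hch : List.Chain' (fun s t => D.Arc (f s) (f t)) (l ++ [a])) : False := by
  have hmap : (l.map f).Nodup :=
    hnd.map_on (fun i hi j hj h => hfinj i (hle i hi) j (hle j hj) h)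
  apply cyc_core hnocyc f a l hhead (by omega) hmap hch
  intro u hu
  obtain ⟨i, hi, rfl⟩ := hfsurj u
  have : i ≠ a₀ := fun h => hnT (h ▸ hu)
  exact List.mem_map_of_mem (hcov i hi this)

lemma partition {V : Type*} [Fintype V] {m : ℕ} {D : Dgr V} (hm : 2 ≤ m)
    (b : ZMod (2*m) → V) (hbinj : Function.Injective b)
    (w : V) (hT : D.TVertex m w)
    (hout : ∀ v, D.Arc w v → v ∈ Set.range b)
    (hin : ∀ v, D.Arc v w → v ∈ Set.range b)
    (hforb : ∀ z : ZMod (2*m), ¬ (D.Arc (b z) w ∧ D.Arc w (b (z+1)))) :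
    ∀ z : ZMod (2*m), D.Arc w (b z) ∨ D.Arc (b (z - 1)) w := by
  classical
  haveI : NeZero (2*m) := ⟨by omega⟩
  set Sp := Finset.univ.filter (fun z : ZMod (2*m) => D.Arc w (b z)) with hSpd
  set Sm := Finset.univ.filter (fun z : ZMod (2*m) => D.Arc (b z) w) with hSmd
  have hcSp : m ≤ Sp.card := by
    have h1 : {v | D.Arc w v} = ↑(Sp.image b) := by
      ext v
      simp only [Set.mem_setOf_eq, Finset.coe_image, Set.mem_image, Finset.mem_coe, hSpd,
        Finset.mem_filter, Finset.mem_univ, true_and]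
      constructor
      · intro hv
        obtain ⟨z, rfl⟩ := hout v hv
        exact ⟨z, hv, rfl⟩
      · rintro ⟨z, hz, rfl⟩; exact hz
    have h2 := hT.1
    rw [Dgr.outDeg, h1, Set.ncard_coe_finset, Finset.card_image_of_injective _ hbinj] at h2
    exact h2
  have hcSm : m ≤ Sm.card := by
    have h1 : {v | D.Arc v w} = ↑(Sm.image b) := by
      ext v
      simp only [Set.mem_setOf_eq, Finset.coe_image, Set.mem_image, Finset.mem_coe, hSmd,
        Finset.mem_filter, Finset.mem_univ, true_and]
      constructor
      · intro hv
        obtain ⟨z, rfl⟩ := hin v hv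
        exact ⟨z, hv, rfl⟩
      · rintro ⟨z, hz, rfl⟩; exact hz
    have h2 := hT.2
    rw [Dgr.inDeg, h1, Set.ncard_coe_finset, Finset.card_image_of_injective _ hbinj] at h2
    exact h2
  have hdisj : Disjoint Sp (Sm.image (· + 1)) := by
    rw [Finset.disjoint_left]
    rintro z hz hz'
    rw [Finset.mem_image] at hz'
    obtain ⟨w', hw', rfl⟩ := hz'
    rw [hSpd, Finset.mem_filter] at hz
    rw [hSmd, Finset.mem_filter] at hw'
    exact hforb w' ⟨hw'.2, hz.2⟩
  have hci : (Sm.image (· + 1)).card = Sm.card :=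
    Finset.card_image_of_injective _ (add_left_injective 1)
  have hcu : (Sp ∪ Sm.image (· + 1)).card = Sp.card + Sm.card := by
    rw [Finset.card_union_of_disjoint hdisj, hci]
  have huniv : Sp ∪ Sm.image (· + 1) = Finset.univ := by
    apply Finset.eq_univ_of_card
    have hc : Fintype.card (ZMod (2*m)) = 2*m := ZMod.card _
    have hle := Finset.card_le_univ (Sp ∪ Sm.image (· + 1))
    omega
  intro z
  have hz : z ∈ Sp ∪ Sm.image (· + 1) := huniv ▸ Finset.mem_univ z
  rcases Finset.mem_union.mp hz with h | h
  · left; rw [hSpd, Finset.mem_filter] at h; exact h.2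
  · right
    rw [Finset.mem_image] at h
    obtain ⟨z', hz', he⟩ := h
    rw [hSmd, Finset.mem_filter] at hz'
    have : z - 1 = z' := by rw [← he]; ring
    rw [this]
    exact hz'.2
end Rem1

open Rem1 in
/-- **Remark 1.** Setup as in Claim 3 (`b i = x_i`, `y = x_{n-1} = b 0`, `p = n-2 = 2m-1`).
If for some `k ∈ [2, p-1]` the vertex `x_k` is adjacent to neither `x` nor `y`, then
`x_p x_k, x_k x_1 ∈ D`, and `N⁺(x) = N⁺(y)`, `N⁻(x) = N⁻(y)`. -/
theorem statement11 {V : Type*} [Fintype V] (m : ℕ) (D : Dgr V)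
    (hcard : Fintype.card V = 2 * m + 1) (hn : 5 ≤ 2 * m + 1)
    (hstrong : D.Strong)
    (hnocyc : ¬ D.CycleThrough {u | D.TVertex m u})
    (b : ZMod (2 * m) → V) (hb : D.IsCycle b)
    (x : V) (hx : x ∉ Set.range b)
    (hxy : ¬ D.Adj x (b 0))
    (k : ℕ) (hk1 : 2 ≤ k) (hk2 : k ≤ 2 * m - 2)
    (hknx : ¬ D.Adj (b (k : ZMod (2 * m))) x)
    (hkny : ¬ D.Adj (b (k : ZMod (2 * m))) (b 0)) :
    D.Arc (b ((2 * m - 1 : ℕ) : ZMod (2 * m))) (b (k : ZMod (2 * m))) ∧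
    D.Arc (b (k : ZMod (2 * m))) (b 1) ∧
    {v | D.Arc x v} = {v | D.Arc (b 0) v} ∧
    {v | D.Arc v x} = {v | D.Arc v (b 0)} := by
  have hm : 2 ≤ m := by omega
  haveI : NeZero (2*m) := ⟨by omega⟩
  obtain ⟨hb2, hbinj, harc⟩ := hb
  have hxy1 : ¬ D.Arc x (b 0) := fun h => hxy (Or.inl h)
  have hxy2 : ¬ D.Arc (b 0) x := fun h => hxy (Or.inr h)
  have hkx1 : ¬ D.Arc (b (k : ZMod (2*m))) x := fun h => hknx (Or.inl h)
  have hkx2 : ¬ D.Arc x (b (k : ZMod (2*m))) := fun h => hknx (Or.inr h)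
  have hky1 : ¬ D.Arc (b (k : ZMod (2*m))) (b 0) := fun h => hkny (Or.inl h)
  have hky2 : ¬ D.Arc (b 0) (b (k : ZMod (2*m))) := fun h => hkny (Or.inr h)
  classical
  -- range of b is everything except x
  have hrange : Set.range b = {x}ᶜ := by
    have hsub : Set.range b ⊆ {x}ᶜ := by
      rintro v ⟨z, rfl⟩ hv
      exact hx ⟨z, hv⟩
    refine Set.eq_of_subset_of_ncard_le hsub ?_ (Set.toFinite _)
    have h1 : (Set.range b).ncard = 2*m := by
      have : Set.range b = ↑(Finset.univ.image b) := by
        ext v; simp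
      rw [this, Set.ncard_coe_finset, Finset.card_image_of_injective _ hbinj,
        Finset.card_univ, ZMod.card]
    have h2 : ({x}ᶜ : Set V).ncard = 2*m := by
      have h3 := Set.ncard_add_ncard_compl ({x} : Set V)
      rw [Set.ncard_singleton] at h3
      have hcV : Nat.card V = 2*m+1 := by rw [Nat.card_eq_fintype_card, hcard]
      omega
    omega
  have hvsurj : ∀ v : V, v = x ∨ ∃ z, v = b z := by
    intro v
    by_cases hvx : v = x
    · exact Or.inl hvx
    · right
      have : v ∈ Set.range b := by rw [hrange]; exact hvx
      obtain ⟨z, hz⟩ := this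
      exact ⟨z, hz.symm⟩
  set f : ℕ → V := fun i => if i = 2*m then x else b ((i : ℕ) : ZMod (2*m)) with hfdef
  have hf2m : f (2*m) = x := by simp [hfdef]
  have hfb : ∀ i : ℕ, i < 2*m → f i = b ((i : ℕ) : ZMod (2*m)) := by
    intro i hi
    simp only [hfdef]
    rw [if_neg (by omega)]
  have hfz : ∀ z : ZMod (2*m), f z.val = b z := by
    intro z
    rw [hfb z.val (ZMod.val_lt z), ZMod.natCast_rightInverse z]
  have hfinj : ∀ i ≤ 2*m, ∀ j ≤ 2*m, f i = f j → i = j := by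
    intro i hi j hj h
    by_cases hi2 : i = 2*m <;> by_cases hj2 : j = 2*m
    · omega
    · exfalso; rw [hi2, hf2m, hfb j (by omega)] at h; exact hx ⟨_, h.symm⟩
    · exfalso; rw [hj2, hf2m, hfb i (by omega)] at h; exact hx ⟨_, h⟩
    · rw [hfb i (by omega), hfb j (by omega)] at h
      have he := hbinj h
      have h1 : ((i:ℕ):ZMod (2*m)).val = i := ZMod.val_cast_of_lt (by omega)
      have h2 : ((j:ℕ):ZMod (2*m)).val = j := ZMod.val_cast_of_lt (by omega)
      rw [he] at h1; omega
  have hfsurj : ∀ v, ∃ i, i ≤ 2*m ∧ f i = v := by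
    intro v
    rcases hvsurj v with rfl | ⟨z, rfl⟩
    · exact ⟨2*m, le_refl _, hf2m⟩
    · exact ⟨z.val, by have := ZMod.val_lt z; omega, hfz z⟩
  have harcf : ∀ t : ℕ, t + 1 < 2*m → D.Arc (f t) (f (t+1)) := by
    intro t ht
    rw [hfb t (by omega), hfb (t+1) (by omega)]
    have e : ((t+1 : ℕ) : ZMod (2*m)) = ((t:ℕ) : ZMod (2*m)) + 1 := by push_cast; ring
    rw [e]; exact harc _
  have hP1 : ((2*m-1 : ℕ) : ZMod (2*m)) + 1 = 0 := by
    have e : ((2*m-1 : ℕ) : ZMod (2*m)) + 1 = ((2*m-1+1 : ℕ) : ZMod (2*m)) := by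
      push_cast; ring
    rw [e, show 2*m-1+1 = 2*m from by omega, ZMod.natCast_self]
  have FP0 : D.Arc (f (2*m-1)) (f 0) := by
    rw [hfb _ (by omega), hfb 0 (by omega)]
    have h := harc ((2*m-1 : ℕ) : ZMod (2*m))
    rw [hP1] at h
    simpa using h
  -- Step 1 : x is a T-vertex
  have hTx : D.TVertex m x := by
    by_contra hnx
    refine near hm hnocyc f hfinj hfsurj (2*m) (by rwa [hf2m]) 0
      (List.range' 0 (2*m-1) ++ [2*m-1]) (head?_ra (by omega) _) ?_ ?_ ?_ ?_ ?_
    · simp [List.length_range']; omega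
    · intro t ht
      rw [List.mem_append, List.mem_range'_1] at ht
      simp at ht
      omega
    · rw [List.nodup_append]
      refine ⟨List.nodup_range', List.nodup_singleton _, ?_⟩
      intro t ht t' ht'
      rw [List.mem_range'_1] at ht
      simp at ht'
      omega
    · intro t ht ht2
      rw [List.mem_append, List.mem_range'_1]
      simp
      omega
    · rw [List.append_assoc, List.singleton_append]
      refine chain'_blk 0 (2*m-1) (by omega) (fun t h1 h2 => harcf t (by omega))
        (2*m-1) [0] ?_ ?_ ?_
      · rw [show 0+(2*m-1)-1 = 2*m-2 from by omega]
        have h := harcf (2*m-2) (by omega)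
        rwa [show 2*m-2+1 = 2*m-1 from by omega] at h
      · intro d hd
        simp at hd
        subst hd
        exact FP0
      · exact List.isChain_singleton _
  -- Step 2 : forbidden insertions of x into C
  have hforbx : ∀ z : ZMod (2*m), ¬ (D.Arc (b z) x ∧ D.Arc x (b (z+1))) := by
    rintro z ⟨h1, h2⟩
    by_cases hz0 : z.val = 0
    · rw [(ZMod.val_eq_zero z).mp hz0] at h1
      exact hxy2 h1
    by_cases hzP : z.val = 2*m - 1
    · have hz : z = ((2*m-1 : ℕ) : ZMod (2*m)) := by
        rw [← ZMod.natCast_rightInverse z, hzP]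
      rw [hz, hP1] at h2
      exact hxy1 h2
    have hzv := ZMod.val_lt z
    have hfi : f z.val = b z := hfz z
    have hfi1 : f (z.val+1) = b (z+1) := by
      rw [hfb (z.val+1) (by omega), Nat.cast_add, Nat.cast_one, ZMod.natCast_rightInverse z]
    have h1f : D.Arc (f z.val) (f (2*m)) := by rw [hfi, hf2m]; exact h1
    have h2f : D.Arc (f (2*m)) (f (z.val+1)) := by rw [hf2m, hfi1]; exact h2
    refine ham hm hnocyc f hfinj hfsurj 1
      (List.range' 1 z.val ++ (2*m :: (List.range' (z.val+1) (2*m-1-z.val) ++ [0])))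
      (head?_ra (by omega) _) ?_ ?_ ?_ ?_
    · simp [List.length_range']; omega
    · intro t ht
      simp [List.mem_append, List.mem_range'_1] at ht
      omega
    · simp only [List.nodup_append, List.nodup_cons, List.disjoint_left, List.mem_append,
        List.mem_cons, List.mem_range'_1, List.mem_singleton, List.not_mem_nil, or_false,
        false_or, List.nodup_nil, and_true, true_and, List.nodup_singleton, nr, not_false_iff]
      repeat' apply And.intro
      all_goals (intros; omega)
    · simp only [List.append_assoc, List.cons_append, List.singleton_append]
      refine chain'_blk 1 z.val (by omega) (fun t h1 h2 => harcf t (by omega)) (2*m) _ ?_ ?_ ?_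
      · rw [show 1+z.val-1 = z.val from by omega]; exact h1f
      · rw [head?_ra (by omega)]
        rintro d ⟨rfl⟩
        exact h2f
      · refine chain'_blk (z.val+1) (2*m-1-z.val) (by omega)
          (fun t h1 h2 => harcf t (by omega)) 0 [1] ?_ ?_ ?_
        · rw [show z.val+1+(2*m-1-z.val)-1 = 2*m-1 from by omega]; exact FP0
        · intro d hd; simp at hd; subst hd
          simpa using harcf 0 (by omega)
        · exact List.isChain_singleton _
  -- Step 3 : dichotomy for x and corner facts
  have hdx : ∀ z : ZMod (2*m), D.Arc x (b z) ∨ D.Arc (b (z-1)) x :=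
    partition hm b hbinj x hTx
      (fun v hv => by
        rcases hvsurj v with h | ⟨z, hz⟩
        · exact absurd (h ▸ hv) (D.loopless x)
        · exact ⟨z, hz.symm⟩)
      (fun v hv => by
        rcases hvsurj v with h | ⟨z, hz⟩
        · exact absurd (h ▸ hv) (D.loopless x)
        · exact ⟨z, hz.symm⟩)
      hforbx
  have Zx1 : D.Arc x (b 1) := by
    rcases hdx 1 with h | h
    · exact h
    · rw [sub_self] at h; exact absurd h hxy2
  have hm10 : (0 : ZMod (2*m)) - 1 = ((2*m-1:ℕ) : ZMod (2*m)) := by rw [← hP1]; ring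
  have ZxP : D.Arc (b ((2*m-1 : ℕ) : ZMod (2*m))) x := by
    rcases hdx 0 with h | h
    · exact absurd h hxy1
    · rwa [hm10] at h
  have hkm1 : ((k:ℕ) : ZMod (2*m)) - 1 = ((k-1:ℕ) : ZMod (2*m)) := by
    have h : ((k-1:ℕ) : ZMod (2*m)) + 1 = ((k-1+1:ℕ) : ZMod (2*m)) := by push_cast; ring
    rw [show k-1+1 = k from by omega] at h
    rw [← h]; ring
  have hkp1 : ((k:ℕ) : ZMod (2*m)) + 1 = ((k+1:ℕ) : ZMod (2*m)) := by push_cast; ring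
  have hkp1m : ((k+1:ℕ) : ZMod (2*m)) - 1 = ((k:ℕ):ZMod (2*m)) := by rw [← hkp1]; ring
  have Zxkm : D.Arc (b ((k-1:ℕ) : ZMod (2*m))) x := by
    rcases hdx ((k:ℕ) : ZMod (2*m)) with h | h
    · exact absurd h hkx2
    · rwa [hkm1] at h
  have Zxkp : D.Arc x (b ((k+1:ℕ) : ZMod (2*m))) := by
    rcases hdx ((k+1:ℕ) : ZMod (2*m)) with h | h
    · exact h
    · rw [hkp1m] at h
      exact absurd h hkx1
  have Fx1 : D.Arc (f (2*m)) (f 1) := by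
    rw [hf2m, hfb 1 (by omega), Nat.cast_one]; exact Zx1
  have FxP : D.Arc (f (2*m-1)) (f (2*m)) := by
    rw [hf2m, hfb _ (by omega)]; exact ZxP
  have Fxkm : D.Arc (f (k-1)) (f (2*m)) := by
    rw [hf2m, hfb _ (by omega)]; exact Zxkm
  have Fxkp : D.Arc (f (2*m)) (f (k+1)) := by
    rw [hf2m, hfb _ (by omega)]; exact Zxkp
  have hf0 : f 0 = b 0 := by rw [hfb 0 (by omega), Nat.cast_zero]
  -- Step 4 : y = b 0 is a T-vertex
  have hTy : D.TVertex m (b 0) := by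
    by_contra hny
    refine near hm hnocyc f hfinj hfsurj 0 (by rwa [hf0]) 1
      (List.range' 1 (2*m-1) ++ [2*m]) (head?_ra (by omega) _) ?_ ?_ ?_ ?_ ?_
    · simp [List.length_range']; omega
    · intro t ht; simp [List.mem_append, List.mem_range'_1] at ht; omega
    · simp only [List.nodup_append, List.nodup_cons, List.disjoint_left, List.mem_append,
        List.mem_cons, List.mem_range'_1, List.mem_singleton, List.not_mem_nil, or_false,
        false_or, List.nodup_nil, and_true, true_and, List.nodup_singleton, nr, not_false_iff]
      repeat' apply And.intro
      all_goals (intros; omega)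
    · intro t ht ht2
      simp [List.mem_append, List.mem_range'_1]
      omega
    · rw [List.append_assoc, List.singleton_append]
      refine chain'_blk 1 (2*m-1) (by omega) (fun t h1 h2 => harcf t (by omega)) (2*m) [1] ?_ ?_ ?_
      · rw [show 1+(2*m-1)-1 = 2*m-1 from by omega]; exact FxP
      · intro d hd; simp at hd; subst hd; exact Fx1
      · exact List.isChain_singleton _
  -- Step 5 : forbidden insertions of y
  have hforby : ∀ z : ZMod (2*m), ¬ (D.Arc (b z) (b 0) ∧ D.Arc (b 0) (b (z+1))) := by
    rintro z ⟨h1, h2⟩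
    by_cases hz0 : z.val = 0
    · rw [(ZMod.val_eq_zero z).mp hz0] at h1
      exact D.loopless _ h1
    by_cases hzP : z.val = 2*m-1
    · have hz : z = ((2*m-1 : ℕ) : ZMod (2*m)) := by rw [← ZMod.natCast_rightInverse z, hzP]
      rw [hz, hP1] at h2
      exact D.loopless _ h2
    have hzv := ZMod.val_lt z
    have hfi : f z.val = b z := hfz z
    have hfi1 : f (z.val+1) = b (z+1) := by
      rw [hfb (z.val+1) (by omega), Nat.cast_add, Nat.cast_one, ZMod.natCast_rightInverse z]
    have h1f : D.Arc (f z.val) (f 0) := by rw [hfi, hf0]; exact h1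
    have h2f : D.Arc (f 0) (f (z.val+1)) := by rw [hf0, hfi1]; exact h2
    refine ham hm hnocyc f hfinj hfsurj 1
      (List.range' 1 z.val ++ (0 :: (List.range' (z.val+1) (2*m-1-z.val) ++ [2*m])))
      (head?_ra (by omega) _) ?_ ?_ ?_ ?_
    · simp [List.length_range']; omega
    · intro t ht; simp [List.mem_append, List.mem_range'_1] at ht; omega
    · simp only [List.nodup_append, List.nodup_cons, List.disjoint_left, List.mem_append,
        List.mem_cons, List.mem_range'_1, List.mem_singleton, List.not_mem_nil, or_false,
        false_or, List.nodup_nil, and_true, true_and, List.nodup_singleton, nr, not_false_iff]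
      repeat' apply And.intro
      all_goals (intros; omega)
    · simp only [List.append_assoc, List.cons_append, List.singleton_append]
      refine chain'_blk 1 z.val (by omega) (fun t h1 h2 => harcf t (by omega)) 0 _ ?_ ?_ ?_
      · rw [show 1+z.val-1 = z.val from by omega]; exact h1f
      · rw [head?_ra (by omega)]
        rintro d ⟨rfl⟩
        exact h2f
      · refine chain'_blk (z.val+1) (2*m-1-z.val) (by omega)
          (fun t h1 h2 => harcf t (by omega)) (2*m) [1] ?_ ?_ ?_
        · rw [show z.val+1+(2*m-1-z.val)-1 = 2*m-1 from by omega]; exact FxP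
        · intro d hd; simp at hd; subst hd; exact Fx1
        · exact List.isChain_singleton _
  -- Step 6 : dichotomy for y and corners
  have hdy : ∀ z : ZMod (2*m), D.Arc (b 0) (b z) ∨ D.Arc (b (z-1)) (b 0) :=
    partition hm b hbinj (b 0) hTy
      (fun v hv => by
        rcases hvsurj v with h | ⟨z, hz⟩
        · exact absurd (h ▸ hv) hxy2
        · exact ⟨z, hz.symm⟩)
      (fun v hv => by
        rcases hvsurj v with h | ⟨z, hz⟩
        · exact absurd (h ▸ hv) hxy1
        · exact ⟨z, hz.symm⟩)
      hforby
  have Zy1 : D.Arc (b 0) (b 1) := by simpa using harc 0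
  have ZyP : D.Arc (b ((2*m-1:ℕ):ZMod (2*m))) (b 0) := by
    have h := harc ((2*m-1:ℕ):ZMod (2*m)); rwa [hP1] at h
  have Zykm : D.Arc (b ((k-1:ℕ):ZMod (2*m))) (b 0) := by
    rcases hdy ((k:ℕ):ZMod (2*m)) with h | h
    · exact absurd h hky2
    · rwa [hkm1] at h
  have Zykp : D.Arc (b 0) (b ((k+1:ℕ):ZMod (2*m))) := by
    rcases hdy ((k+1:ℕ):ZMod (2*m)) with h | h
    · exact h
    · rw [hkp1m] at h; exact absurd h hky1
  have Fy1 : D.Arc (f 0) (f 1) := by rw [hf0, hfb 1 (by omega), Nat.cast_one]; exact Zy1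
  have Fykm : D.Arc (f (k-1)) (f 0) := by rw [hf0, hfb _ (by omega)]; exact Zykm
  have Fykp : D.Arc (f 0) (f (k+1)) := by rw [hf0, hfb _ (by omega)]; exact Zykp
  -- Step 7 : b k is a T-vertex
  have hfk : f k = b ((k:ℕ):ZMod (2*m)) := hfb k (by omega)
  have hTk : D.TVertex m (b ((k:ℕ) : ZMod (2*m))) := by
    by_contra hnk
    refine near hm hnocyc f hfinj hfsurj k (by rwa [hfk]) 1
      (List.range' 1 (k-1) ++ (2*m :: (List.range' (k+1) (2*m-1-k) ++ [0])))
      (head?_ra (by omega) _) ?_ ?_ ?_ ?_ ?_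
    · simp [List.length_range']; omega
    · intro t ht; simp [List.mem_append, List.mem_range'_1] at ht; omega
    · simp only [List.nodup_append, List.nodup_cons, List.disjoint_left, List.mem_append,
        List.mem_cons, List.mem_range'_1, List.mem_singleton, List.not_mem_nil, or_false,
        false_or, List.nodup_nil, and_true, true_and, List.nodup_singleton, nr, not_false_iff]
      repeat' apply And.intro
      all_goals (intros; omega)
    · intro t ht ht2
      simp [List.mem_append, List.mem_range'_1]
      omega
    · simp only [List.append_assoc, List.cons_append, List.singleton_append]
      refine chain'_blk 1 (k-1) (by omega) (fun t h1 h2 => harcf t (by omega)) (2*m) _ ?_ ?_ ?_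
      · rw [show 1+(k-1)-1 = k-1 from by omega]; exact Fxkm
      · rw [head?_ra (by omega)]
        rintro d ⟨rfl⟩
        exact Fxkp
      · refine chain'_blk (k+1) (2*m-1-k) (by omega) (fun t h1 h2 => harcf t (by omega)) 0 [1] ?_ ?_ ?_
        · rw [show k+1+(2*m-1-k)-1 = 2*m-1 from by omega]; exact FP0
        · intro d hd; simp at hd; subst hd; exact Fy1
        · exact List.isChain_singleton _
  -- Step 8 : forbidden insertions of b k
  have hforbk : ∀ z : ZMod (2*m),
      ¬ (D.Arc (b z) (b ((k:ℕ):ZMod (2*m))) ∧ D.Arc (b ((k:ℕ):ZMod (2*m))) (b (z+1))) := by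
    rintro z ⟨h1, h2⟩
    by_cases hz0 : z.val = 0
    · rw [(ZMod.val_eq_zero z).mp hz0] at h1; exact hky2 h1
    by_cases hzP : z.val = 2*m-1
    · have hz : z = ((2*m-1:ℕ):ZMod (2*m)) := by rw [← ZMod.natCast_rightInverse z, hzP]
      rw [hz, hP1] at h2; exact hky1 h2
    by_cases hzk : z.val = k
    · have hz : z = ((k:ℕ):ZMod (2*m)) := by rw [← ZMod.natCast_rightInverse z, hzk]
      rw [hz] at h1; exact D.loopless _ h1
    by_cases hzk1 : z.val = k-1
    · have hz : z = ((k-1:ℕ):ZMod (2*m)) := by rw [← ZMod.natCast_rightInverse z, hzk1]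
      have he : z + 1 = ((k:ℕ):ZMod (2*m)) := by rw [hz, ← hkm1]; ring
      rw [he] at h2; exact D.loopless _ h2
    have hzv := ZMod.val_lt z
    have hfi : f z.val = b z := hfz z
    have hfi1 : f (z.val+1) = b (z+1) := by
      rw [hfb (z.val+1) (by omega), Nat.cast_add, Nat.cast_one, ZMod.natCast_rightInverse z]
    have h1f : D.Arc (f z.val) (f k) := by rw [hfi, hfk]; exact h1
    have h2f : D.Arc (f k) (f (z.val+1)) := by rw [hfk, hfi1]; exact h2
    have hor : z.val < k ∨ k < z.val := by omega
    rcases hor with hlt | hgt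
    · refine ham hm hnocyc f hfinj hfsurj 1
        (List.range' 1 z.val ++ (k :: (List.range' (z.val+1) (k-1-z.val) ++
          (2*m :: (List.range' (k+1) (2*m-1-k) ++ [0])))))
        (head?_ra (by omega) _) ?_ ?_ ?_ ?_
      · simp [List.length_range']; omega
      · intro t ht; simp [List.mem_append, List.mem_range'_1] at ht; omega
      · simp only [List.nodup_append, List.nodup_cons, List.disjoint_left, List.mem_append,
          List.mem_cons, List.mem_range'_1, List.mem_singleton, List.not_mem_nil, or_false,
          false_or, List.nodup_nil, and_true, true_and, List.nodup_singleton, nr, not_false_iff]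
        repeat' apply And.intro
        all_goals (intros; omega)
      · simp only [List.append_assoc, List.cons_append, List.singleton_append]
        refine chain'_blk 1 z.val (by omega) (fun t h1 h2 => harcf t (by omega)) k _ ?_ ?_ ?_
        · rw [show 1+z.val-1 = z.val from by omega]; exact h1f
        · rw [head?_ra (by omega)]; rintro d ⟨rfl⟩; exact h2f
        · refine chain'_blk (z.val+1) (k-1-z.val) (by omega)
            (fun t h1 h2 => harcf t (by omega)) (2*m) _ ?_ ?_ ?_
          · rw [show z.val+1+(k-1-z.val)-1 = k-1 from by omega]; exact Fxkm
          · rw [head?_ra (by omega)]; rintro d ⟨rfl⟩; exact Fxkp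
          · refine chain'_blk (k+1) (2*m-1-k) (by omega)
              (fun t h1 h2 => harcf t (by omega)) 0 [1] ?_ ?_ ?_
            · rw [show k+1+(2*m-1-k)-1 = 2*m-1 from by omega]; exact FP0
            · intro d hd; simp at hd; subst hd; exact Fy1
            · exact List.isChain_singleton _
    · refine ham hm hnocyc f hfinj hfsurj 1
        (List.range' 1 (k-1) ++ (2*m :: (List.range' (k+1) (z.val-k) ++
          (k :: (List.range' (z.val+1) (2*m-1-z.val) ++ [0])))))
        (head?_ra (by omega) _) ?_ ?_ ?_ ?_
      · simp [List.length_range']; omega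
      · intro t ht; simp [List.mem_append, List.mem_range'_1] at ht; omega
      · simp only [List.nodup_append, List.nodup_cons, List.disjoint_left, List.mem_append,
          List.mem_cons, List.mem_range'_1, List.mem_singleton, List.not_mem_nil, or_false,
          false_or, List.nodup_nil, and_true, true_and, List.nodup_singleton, nr, not_false_iff]
        repeat' apply And.intro
        all_goals (intros; omega)
      · simp only [List.append_assoc, List.cons_append, List.singleton_append]
        refine chain'_blk 1 (k-1) (by omega) (fun t h1 h2 => harcf t (by omega)) (2*m) _ ?_ ?_ ?_
        · rw [show 1+(k-1)-1 = k-1 from by omega]; exact Fxkm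
        · rw [head?_ra (by omega)]; rintro d ⟨rfl⟩; exact Fxkp
        · refine chain'_blk (k+1) (z.val-k) (by omega)
            (fun t h1 h2 => harcf t (by omega)) k _ ?_ ?_ ?_
          · rw [show k+1+(z.val-k)-1 = z.val from by omega]; exact h1f
          · rw [head?_ra (by omega)]; rintro d ⟨rfl⟩; exact h2f
          · refine chain'_blk (z.val+1) (2*m-1-z.val) (by omega)
              (fun t h1 h2 => harcf t (by omega)) 0 [1] ?_ ?_ ?_
            · rw [show z.val+1+(2*m-1-z.val)-1 = 2*m-1 from by omega]; exact FP0
            · intro d hd; simp at hd; subst hd; exact Fy1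
            · exact List.isChain_singleton _
  -- Step 9 : dichotomy for b k and the first two conclusions
  have hdk : ∀ z : ZMod (2*m),
      D.Arc (b ((k:ℕ):ZMod (2*m))) (b z) ∨ D.Arc (b (z-1)) (b ((k:ℕ):ZMod (2*m))) :=
    partition hm b hbinj _ hTk
      (fun v hv => by
        rcases hvsurj v with h | ⟨z, hz⟩
        · exact absurd (h ▸ hv) hkx1
        · exact ⟨z, hz.symm⟩)
      (fun v hv => by
        rcases hvsurj v with h | ⟨z, hz⟩
        · exact absurd (h ▸ hv) hkx2
        · exact ⟨z, hz.symm⟩)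
      hforbk
  have ZPk : D.Arc (b ((2*m-1:ℕ):ZMod (2*m))) (b ((k:ℕ):ZMod (2*m))) := by
    rcases hdk 0 with h | h
    · exact absurd h hky1
    · rwa [hm10] at h
  have Zk1 : D.Arc (b ((k:ℕ):ZMod (2*m))) (b 1) := by
    rcases hdk 1 with h | h
    · exact h
    · rw [sub_self] at h; exact absurd h hky2
  have FPk : D.Arc (f (2*m-1)) (f k) := by rw [hfb _ (by omega), hfk]; exact ZPk
  have Fk1 : D.Arc (f k) (f 1) := by rw [hfk, hfb 1 (by omega), Nat.cast_one]; exact Zk1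
  have hzm1g : ∀ z : ZMod (2*m), z.val ≠ 0 → z - 1 = ((z.val - 1 : ℕ) : ZMod (2*m)) := by
    intro z h0
    have h : ((z.val-1:ℕ) : ZMod (2*m)) + 1 = ((z.val-1+1:ℕ) : ZMod (2*m)) := by
      rw [Nat.cast_add, Nat.cast_one]
    rw [show z.val-1+1 = z.val from by omega, ZMod.natCast_rightInverse z] at h
    rw [sub_eq_iff_eq_add]
    exact h.symm
  -- Step 10 : exchange argument, N+(x) = N+(y) pointwise on the cycle
  have hSpTp : ∀ z : ZMod (2*m), D.Arc x (b z) ↔ D.Arc (b 0) (b z) := by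
    intro z
    constructor
    · intro hxz
      by_contra hyz
      have hj0 : z.val ≠ 0 := fun h => hxy1 (by rwa [(ZMod.val_eq_zero z).mp h] at hxz)
      have hj1 : z.val ≠ 1 := by
        intro h
        have hz : z = 1 := by rw [← ZMod.natCast_rightInverse z, h, Nat.cast_one]
        rw [hz] at hyz; exact hyz Zy1
      have hjk : z.val ≠ k := by
        intro h
        have hz : z = ((k:ℕ):ZMod (2*m)) := by rw [← ZMod.natCast_rightInverse z, h]
        rw [hz] at hxz; exact hkx2 hxz
      have hjk1 : z.val ≠ k+1 := by
        intro h
        have hz : z = ((k+1:ℕ):ZMod (2*m)) := by rw [← ZMod.natCast_rightInverse z, h]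
        rw [hz] at hyz; exact hyz Zykp
      have hzv := ZMod.val_lt z
      have hjm : D.Arc (b (z-1)) (b 0) := (hdy z).resolve_left hyz
      have hjmf : D.Arc (f (z.val-1)) (f 0) := by
        rw [hfb (z.val-1) (by omega), hf0, ← hzm1g z hj0]; exact hjm
      have hxzf : D.Arc (f (2*m)) (f z.val) := by rw [hf2m, hfz z]; exact hxz
      rcases (by omega : z.val < k ∨ k < z.val) with hlt | hgt
      · refine ham hm hnocyc f hfinj hfsurj z.val
          (List.range' z.val (k-z.val) ++ (k :: (List.range' 1 (z.val-1) ++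
            (0 :: (List.range' (k+1) (2*m-1-k) ++ [2*m])))))
          (head?_ra (by omega) _) ?_ ?_ ?_ ?_
        · simp [List.length_range']; omega
        · intro t ht; simp [List.mem_append, List.mem_range'_1] at ht; omega
        · simp only [List.nodup_append, List.nodup_cons, List.disjoint_left, List.mem_append,
            List.mem_cons, List.mem_range'_1, List.mem_singleton, List.not_mem_nil, or_false,
            false_or, List.nodup_nil, and_true, true_and, List.nodup_singleton, nr, not_false_iff]
          repeat' apply And.intro
          all_goals (intros; omega)
        · simp only [List.append_assoc, List.cons_append, List.singleton_append]
          refine chain'_blk z.val (k-z.val) (by omega) (fun t h1 h2 => harcf t (by omega)) k _ ?_ ?_ ?_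
          · rw [show z.val+(k-z.val)-1 = k-1 from by omega]
            have h := harcf (k-1) (by omega)
            rwa [show k-1+1 = k from by omega] at h
          · rw [head?_ra (by omega)]; rintro d ⟨rfl⟩; exact Fk1
          · refine chain'_blk 1 (z.val-1) (by omega) (fun t h1 h2 => harcf t (by omega)) 0 _ ?_ ?_ ?_
            · rw [show 1+(z.val-1)-1 = z.val-1 from by omega]; exact hjmf
            · rw [head?_ra (by omega)]; rintro d ⟨rfl⟩; exact Fykp
            · refine chain'_blk (k+1) (2*m-1-k) (by omega)
                (fun t h1 h2 => harcf t (by omega)) (2*m) [z.val] ?_ ?_ ?_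
              · rw [show k+1+(2*m-1-k)-1 = 2*m-1 from by omega]; exact FxP
              · intro d hd; simp at hd; subst hd; exact hxzf
              · exact List.isChain_singleton _
      · refine ham hm hnocyc f hfinj hfsurj z.val
          (List.range' z.val (2*m-z.val) ++ (k :: (List.range' (k+1) (z.val-1-k) ++
            (0 :: (List.range' 1 (k-1) ++ [2*m])))))
          (head?_ra (by omega) _) ?_ ?_ ?_ ?_
        · simp [List.length_range']; omega
        · intro t ht; simp [List.mem_append, List.mem_range'_1] at ht; omega
        · simp only [List.nodup_append, List.nodup_cons, List.disjoint_left, List.mem_append,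
            List.mem_cons, List.mem_range'_1, List.mem_singleton, List.not_mem_nil, or_false,
            false_or, List.nodup_nil, and_true, true_and, List.nodup_singleton, nr, not_false_iff]
          repeat' apply And.intro
          all_goals (intros; omega)
        · simp only [List.append_assoc, List.cons_append, List.singleton_append]
          refine chain'_blk z.val (2*m-z.val) (by omega) (fun t h1 h2 => harcf t (by omega)) k _ ?_ ?_ ?_
          · rw [show z.val+(2*m-z.val)-1 = 2*m-1 from by omega]; exact FPk
          · rw [head?_ra (by omega)]; rintro d ⟨rfl⟩; exact harcf k (by omega)
          · refine chain'_blk (k+1) (z.val-1-k) (by omega) (fun t h1 h2 => harcf t (by omega)) 0 _ ?_ ?_ ?_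
            · rw [show k+1+(z.val-1-k)-1 = z.val-1 from by omega]; exact hjmf
            · rw [head?_ra (by omega)]; rintro d ⟨rfl⟩; exact Fy1
            · refine chain'_blk 1 (k-1) (by omega)
                (fun t h1 h2 => harcf t (by omega)) (2*m) [z.val] ?_ ?_ ?_
              · rw [show 1+(k-1)-1 = k-1 from by omega]; exact Fxkm
              · intro d hd; simp at hd; subst hd; exact hxzf
              · exact List.isChain_singleton _
    · intro hyz
      by_contra hxz
      have hj0 : z.val ≠ 0 := by
        intro h
        rw [(ZMod.val_eq_zero z).mp h] at hyz; exact D.loopless _ hyz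
      have hj1 : z.val ≠ 1 := by
        intro h
        have hz : z = 1 := by rw [← ZMod.natCast_rightInverse z, h, Nat.cast_one]
        rw [hz] at hxz; exact hxz Zx1
      have hjk : z.val ≠ k := by
        intro h
        have hz : z = ((k:ℕ):ZMod (2*m)) := by rw [← ZMod.natCast_rightInverse z, h]
        rw [hz] at hyz; exact hky2 hyz
      have hjk1 : z.val ≠ k+1 := by
        intro h
        have hz : z = ((k+1:ℕ):ZMod (2*m)) := by rw [← ZMod.natCast_rightInverse z, h]
        rw [hz] at hxz; exact hxz Zxkp
      have hzv := ZMod.val_lt z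
      have hjm : D.Arc (b (z-1)) x := (hdx z).resolve_left hxz
      have hjmf : D.Arc (f (z.val-1)) (f (2*m)) := by
        rw [hfb (z.val-1) (by omega), hf2m, ← hzm1g z hj0]; exact hjm
      have hyzf : D.Arc (f 0) (f z.val) := by rw [hf0, hfz z]; exact hyz
      rcases (by omega : z.val < k ∨ k < z.val) with hlt | hgt
      · refine ham hm hnocyc f hfinj hfsurj z.val
          (List.range' z.val (k-z.val) ++ (k :: (List.range' 1 (z.val-1) ++
            (2*m :: (List.range' (k+1) (2*m-1-k) ++ [0])))))
          (head?_ra (by omega) _) ?_ ?_ ?_ ?_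
        · simp [List.length_range']; omega
        · intro t ht; simp [List.mem_append, List.mem_range'_1] at ht; omega
        · simp only [List.nodup_append, List.nodup_cons, List.disjoint_left, List.mem_append,
            List.mem_cons, List.mem_range'_1, List.mem_singleton, List.not_mem_nil, or_false,
            false_or, List.nodup_nil, and_true, true_and, List.nodup_singleton, nr, not_false_iff]
          repeat' apply And.intro
          all_goals (intros; omega)
        · simp only [List.append_assoc, List.cons_append, List.singleton_append]
          refine chain'_blk z.val (k-z.val) (by omega) (fun t h1 h2 => harcf t (by omega)) k _ ?_ ?_ ?_
          · rw [show z.val+(k-z.val)-1 = k-1 from by omega]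
            have h := harcf (k-1) (by omega)
            rwa [show k-1+1 = k from by omega] at h
          · rw [head?_ra (by omega)]; rintro d ⟨rfl⟩; exact Fk1
          · refine chain'_blk 1 (z.val-1) (by omega) (fun t h1 h2 => harcf t (by omega)) (2*m) _ ?_ ?_ ?_
            · rw [show 1+(z.val-1)-1 = z.val-1 from by omega]; exact hjmf
            · rw [head?_ra (by omega)]; rintro d ⟨rfl⟩; exact Fxkp
            · refine chain'_blk (k+1) (2*m-1-k) (by omega)
                (fun t h1 h2 => harcf t (by omega)) 0 [z.val] ?_ ?_ ?_
              · rw [show k+1+(2*m-1-k)-1 = 2*m-1 from by omega]; exact FP0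
              · intro d hd; simp at hd; subst hd; exact hyzf
              · exact List.isChain_singleton _
      · refine ham hm hnocyc f hfinj hfsurj z.val
          (List.range' z.val (2*m-z.val) ++ (k :: (List.range' (k+1) (z.val-1-k) ++
            (2*m :: (List.range' 1 (k-1) ++ [0])))))
          (head?_ra (by omega) _) ?_ ?_ ?_ ?_
        · simp [List.length_range']; omega
        · intro t ht; simp [List.mem_append, List.mem_range'_1] at ht; omega
        · simp only [List.nodup_append, List.nodup_cons, List.disjoint_left, List.mem_append,
            List.mem_cons, List.mem_range'_1, List.mem_singleton, List.not_mem_nil, or_false,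
            false_or, List.nodup_nil, and_true, true_and, List.nodup_singleton, nr, not_false_iff]
          repeat' apply And.intro
          all_goals (intros; omega)
        · simp only [List.append_assoc, List.cons_append, List.singleton_append]
          refine chain'_blk z.val (2*m-z.val) (by omega) (fun t h1 h2 => harcf t (by omega)) k _ ?_ ?_ ?_
          · rw [show z.val+(2*m-z.val)-1 = 2*m-1 from by omega]; exact FPk
          · rw [head?_ra (by omega)]; rintro d ⟨rfl⟩; exact harcf k (by omega)
          · refine chain'_blk (k+1) (z.val-1-k) (by omega)
              (fun t h1 h2 => harcf t (by omega)) (2*m) _ ?_ ?_ ?_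
            · rw [show k+1+(z.val-1-k)-1 = z.val-1 from by omega]; exact hjmf
            · rw [head?_ra (by omega)]; rintro d ⟨rfl⟩; exact Fx1
            · refine chain'_blk 1 (k-1) (by omega)
                (fun t h1 h2 => harcf t (by omega)) 0 [z.val] ?_ ?_ ?_
              · rw [show 1+(k-1)-1 = k-1 from by omega]; exact Fykm
              · intro d hd; simp at hd; subst hd; exact hyzf
              · exact List.isChain_singleton _
  -- Step 11 : N-(x) = N-(y) pointwise on the cycle
  have hSmTm : ∀ z : ZMod (2*m), D.Arc (b z) x ↔ D.Arc (b z) (b 0) := by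
    intro z
    have e : z + 1 - 1 = z := by ring
    constructor
    · intro h
      have h2 : ¬ D.Arc x (b (z+1)) := fun hh => hforbx z ⟨h, hh⟩
      have h3 : ¬ D.Arc (b 0) (b (z+1)) := fun hh => h2 ((hSpTp (z+1)).mpr hh)
      have h4 := (hdy (z+1)).resolve_left h3
      rwa [e] at h4
    · intro h
      have h2 : ¬ D.Arc (b 0) (b (z+1)) := fun hh => hforby z ⟨h, hh⟩
      have h3 : ¬ D.Arc x (b (z+1)) := fun hh => h2 ((hSpTp (z+1)).mp hh)
      have h4 := (hdx (z+1)).resolve_left h3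
      rwa [e] at h4
  -- Step 12 : conclusions
  refine ⟨ZPk, Zk1, ?_, ?_⟩
  · ext v
    simp only [Set.mem_setOf_eq]
    rcases hvsurj v with hv | ⟨z, hv⟩
    · rw [hv]
      constructor
      · intro h; exact absurd h (D.loopless x)
      · intro h; exact absurd h hxy2
    · rw [hv]
      exact hSpTp z
  · ext v
    simp only [Set.mem_setOf_eq]
    rcases hvsurj v with hv | ⟨z, hv⟩
    · rw [hv]
      constructor
      · intro h; exact absurd h (D.loopless x)
      · intro h; exact absurd h hxy1
    · rw [hv]
      exact hSmTm z
end
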